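/- arXiv:2211.01688 — 3 statements merged into one kernel-verified Lean document; each statement's English description precedes it below -/
import Mathlib

section
/- Let k be a nonnegative integer, n a positive integer, and 0 < p < 1 with q = 1 - p, and suppose k ≤ p·n. Then 1 ≤ L(n,k,p) ≤ B_{n,k}(p)/b_{n,k}(p) ≤ U(n,k,p) < 2·L(n,k,p), and all of these inequalities are strict when k ≥ 1. If in addition 0 < f < p where f = k/n, then 1 < L(n,k,p) < B_{n,k}(p)/b_{n,k}(p) < U(n,k,p) ≤ V(n,k,p,0) < (1-f)·p/(p-f). -/
open Real

/-- Binomial probability `b_{n,k}(p) = C(n,k) p^k (1-p)^(n-k)`. -/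
noncomputable def b (n k : ℕ) (p : ℝ) : ℝ :=
  (n.choose k : ℝ) * p ^ k * (1 - p) ^ (n - k)

/-- Lower tail probability `B_{n,k}(p) = ∑_{j=0}^k C(n,j) p^j (1-p)^(n-j)`. -/
noncomputable def B (n k : ℕ) (p : ℝ) : ℝ :=
  ∑ j ∈ Finset.range (k + 1), (n.choose j : ℝ) * p ^ j * (1 - p) ^ (n - j)

/-- `L(n,k,p) = (k + 1 - pn + √((pn - k + 1)² + 4qk))/2` with `q = 1-p`. -/
noncomputable def L (n k p : ℝ) : ℝ :=
  (k + 1 - p * n + Real.sqrt ((p * n - k + 1) ^ 2 + 4 * (1 - p) * k)) / 2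

/-- `V(n,k,p,a) = a + p(n - k + a + 1)/(pn + p - k + a)`. -/
noncomputable def V (n k p a : ℝ) : ℝ :=
  a + p * (n - k + a + 1) / (p * n + p - k + a)

/-- `U(n,k,p) = min_{a ∈ ℕ₀} V(n,k,p,a)`. -/
noncomputable def U (n k p : ℝ) : ℝ := ⨅ a : ℕ, V n k p (a : ℝ)

-- auxiliary lemmas

lemma b_pos {n k : ℕ} {p : ℝ} (hp0 : 0 < p) (hp1 : p < 1) (hkn : k ≤ n) :
    0 < b n k p := by
  have h1 : (0:ℝ) < (n.choose k : ℝ) := by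
    exact_mod_cast Nat.choose_pos hkn
  have h2 : (0:ℝ) < 1 - p := by linarith
  exact mul_pos (mul_pos h1 (pow_pos hp0 k)) (pow_pos h2 (n - k))

lemma b_le_B {n k : ℕ} {p : ℝ} (hp0 : 0 < p) (hp1 : p < 1) :
    b n k p ≤ B n k p := by
  have h2 : (0:ℝ) < 1 - p := by linarith
  unfold B b
  exact Finset.single_le_sum
    (f := fun j => (n.choose j : ℝ) * p ^ j * (1 - p) ^ (n - j))
    (fun i _ => by positivity)
    (Finset.self_mem_range_succ k)

lemma one_le_S {n k : ℕ} {p : ℝ} (hp0 : 0 < p) (hp1 : p < 1) (hkn : k ≤ n) :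
    1 ≤ B n k p / b n k p :=
  (one_le_div (b_pos hp0 hp1 hkn)).mpr (b_le_B hp0 hp1)

lemma S_zero {n : ℕ} {p : ℝ} (hp0 : 0 < p) (hp1 : p < 1) :
    B n 0 p / b n 0 p = 1 := by
  have : B n 0 p = b n 0 p := by
    unfold B b; rw [Finset.sum_range_one]
  rw [this, div_self (b_pos hp0 hp1 (Nat.zero_le n)).ne']

lemma ratio_id {n j : ℕ} {p : ℝ} (hj : j < n) :
    ((j:ℝ)+1) * (1-p) * b n (j+1) p = ((n:ℝ)-(j:ℝ)) * p * b n j p := by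
  unfold b
  have h1 : n - j = (n - (j+1)) + 1 := by omega
  have h2 : ((n - j : ℕ) : ℝ) = (n:ℝ) - (j:ℝ) := by
    push_cast [Nat.cast_sub hj.le]; ring
  have h3 : (n.choose (j+1) : ℝ) * ((j:ℝ)+1) = (n.choose j : ℝ) * ((n:ℝ)-(j:ℝ)) := by
    rw [← h2]
    exact_mod_cast congrArg (Nat.cast : ℕ → ℝ) (Nat.choose_succ_right_eq n j)
  rw [h1]
  rw [pow_succ p j, pow_succ (1-p) (n - (j+1))]
  linear_combination (p^j * p * (1-p) * (1-p)^(n-(j+1))) * h3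

noncomputable def Gg (n j : ℕ) (p : ℝ) : ℝ := ((n:ℝ)-(j:ℝ)+1)*p / (p*((n:ℝ)+1) - (j:ℝ))

lemma S_rec {n j : ℕ} {p : ℝ} (hp0 : 0 < p) (hp1 : p < 1) (hj : j < n) :
    B n (j+1) p / b n (j+1) p
      = 1 + (((j:ℝ)+1)*(1-p)/(((n:ℝ)-(j:ℝ))*p)) * (B n j p / b n j p) := by
  have hb0 := b_pos hp0 hp1 hj.le (n := n) (p := p)
  have hb1 := b_pos hp0 hp1 hj (n := n) (p := p) (k := j+1)
  have hnj : (0:ℝ) < (n:ℝ) - (j:ℝ) := by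
    have : (j:ℝ) < (n:ℝ) := by exact_mod_cast hj
    linarith
  have hBB : B n (j+1) p = B n j p + b n (j+1) p := by
    unfold B b; rw [Finset.sum_range_succ]
  have hr := ratio_id (p := p) hj
  have key : ((j:ℝ)+1)*(1-p)/(((n:ℝ)-(j:ℝ))*p) * (B n j p / b n j p)
      = B n j p / b n (j+1) p := by
    rw [div_mul_div_comm, div_eq_div_iff (mul_ne_zero (mul_pos hnj hp0).ne' hb0.ne') hb1.ne']
    linear_combination (B n j p) * hr
  rw [hBB, add_div, div_self hb1.ne', key, add_comm]

lemma S_le_G : ∀ (k : ℕ) {n : ℕ} {p : ℝ}, 0 < p → p < 1 → (k:ℝ) ≤ p*(n:ℝ) →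
    (B n k p / b n k p ≤ Gg n k p ∧ (1 ≤ k → B n k p / b n k p < Gg n k p)) := by
  intro k
  induction k with
  | zero =>
    intro n p hp0 hp1 hk
    constructor
    · rw [S_zero hp0 hp1]
      unfold Gg
      rw [show ((n:ℝ)-(0:ℕ)+1)*p = p*((n:ℝ)+1) - ((0:ℕ):ℝ) by push_cast; ring]
      rw [div_self]
      have hn0 : (0:ℝ) ≤ (n:ℝ) := Nat.cast_nonneg n
      push_cast
      nlinarith
    · intro h; omega
  | succ k ih =>
    intro n p hp0 hp1 hk
    have hq : (0:ℝ) < 1 - p := by linarith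
    have hk1 : ((k:ℝ)+1) ≤ p*n := by push_cast at hk ⊢; linarith
    have hkpn : (k:ℝ) ≤ p*n := by linarith
    have hn0 : (0:ℝ) < (n:ℝ) := by nlinarith
    have hkn : (k:ℝ) + 1 < (n:ℝ) := by nlinarith
    have hjn : k < n := by exact_mod_cast (by linarith : (k:ℝ) < (n:ℝ))
    have hnk : (0:ℝ) < (n:ℝ) - (k:ℝ) := by linarith
    have hd1 : (0:ℝ) < p*((n:ℝ)+1) - (k:ℝ) := by nlinarith
    have hd2 : (0:ℝ) < p*((n:ℝ)+1) - ((k:ℝ)+1) := by nlinarith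
    have hr : (0:ℝ) < ((k:ℝ)+1)*(1-p)/(((n:ℝ)-(k:ℝ))*p) := by positivity
    -- G monotone
    have hGmono : Gg n k p < Gg n (k+1) p := by
      unfold Gg
      rw [div_lt_div_iff₀ hd1 (by push_cast; linarith)]
      push_cast
      nlinarith [mul_pos (mul_pos hp0 hq) (by linarith : (0:ℝ) < (n:ℝ)+1)]
    -- fixed point
    have hGfix : 1 + (((k:ℝ)+1)*(1-p)/(((n:ℝ)-(k:ℝ))*p)) * Gg n (k+1) p = Gg n (k+1) p := by
      unfold Gg
      push_cast
      field_simp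
      ring
    -- recursion
    have hrec := S_rec hp0 hp1 hjn (p := p)
    obtain ⟨ihle, _⟩ := ih hp0 hp1 hkpn
    have hstep : B n (k+1) p / b n (k+1) p < Gg n (k+1) p := by
      rw [hrec]
      calc 1 + (((k:ℝ)+1)*(1-p)/(((n:ℝ)-(k:ℝ))*p)) * (B n k p / b n k p)
          ≤ 1 + (((k:ℝ)+1)*(1-p)/(((n:ℝ)-(k:ℝ))*p)) * Gg n k p := by
            have := mul_le_mul_of_nonneg_left ihle hr.le
            linarith
        _ < 1 + (((k:ℝ)+1)*(1-p)/(((n:ℝ)-(k:ℝ))*p)) * Gg n (k+1) p := by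
            have := mul_lt_mul_of_pos_left hGmono hr
            linarith
        _ = Gg n (k+1) p := hGfix
    exact ⟨hstep.le, fun _ => hstep⟩

lemma S_le_shiftG : ∀ (k : ℕ) {n j : ℕ} {p : ℝ}, 0 < p → p < 1 → j ≤ k → (k:ℝ) ≤ p*(n:ℝ) →
    (B n k p / b n k p ≤ ((k:ℝ)-(j:ℝ)) + Gg n j p ∧
      (1 ≤ k → B n k p / b n k p < ((k:ℝ)-(j:ℝ)) + Gg n j p)) := by
  intro k
  induction k with
  | zero =>
    intro n j p hp0 hp1 hj hk
    interval_cases j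
    constructor
    · push_cast
      have := (S_le_G 0 hp0 hp1 hk).1
      push_cast at this
      linarith
    · intro h; omega
  | succ k ih =>
    intro n j p hp0 hp1 hj hk
    rcases Nat.lt_or_ge j (k+1) with hjk | hjk
    · -- j ≤ k : use step bound
      have hjk' : j ≤ k := by omega
      have hq : (0:ℝ) < 1 - p := by linarith
      have hk1 : ((k:ℝ)+1) ≤ p*n := by push_cast at hk ⊢; linarith
      have hkpn : (k:ℝ) ≤ p*n := by linarith
      have hn0 : (0:ℝ) < (n:ℝ) := by nlinarith
      have hkn : (k:ℝ) + 1 < (n:ℝ) := by nlinarith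
      have hjn : k < n := by exact_mod_cast (by linarith : (k:ℝ) < (n:ℝ))
      have hnk : (0:ℝ) < (n:ℝ) - (k:ℝ) := by linarith
      have hrec := S_rec hp0 hp1 hjn (p := p)
      have hrlt : ((k:ℝ)+1)*(1-p)/(((n:ℝ)-(k:ℝ))*p) < 1 := by
        rw [div_lt_one (by positivity)]
        nlinarith
      have hS1 : 1 ≤ B n k p / b n k p := one_le_S hp0 hp1 hjn.le
      have hstep : B n (k+1) p / b n (k+1) p < 1 + B n k p / b n k p := by
        rw [hrec]
        have h1 : ((k:ℝ)+1)*(1-p)/(((n:ℝ)-(k:ℝ))*p) * (B n k p / b n k p)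
            < 1 * (B n k p / b n k p) := by
          apply mul_lt_mul_of_pos_right hrlt (by linarith)
        nlinarith
      obtain ⟨ihle, _⟩ := ih hp0 hp1 hjk' hkpn
      have : B n (k+1) p / b n (k+1) p < (((k+1:ℕ):ℝ)-(j:ℝ)) + Gg n j p := by
        push_cast
        push_cast at ihle
        linarith
      exact ⟨this.le, fun _ => this⟩
    · -- j = k+1
      have hj' : j = k+1 := by omega
      subst hj'
      obtain ⟨h1, h2⟩ := S_le_G (k+1) hp0 hp1 hk
      constructor
      · simpa using h1
      · intro h3
        simpa using h2 (by omega)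

lemma Gg_zero {n : ℕ} {p : ℝ} (hp0 : 0 < p) : Gg n 0 p = 1 := by
  unfold Gg
  rw [show ((n:ℝ)-((0:ℕ):ℝ)+1)*p = p*((n:ℝ)+1) - ((0:ℕ):ℝ) by push_cast; ring]
  rw [div_self]
  have : (0:ℝ) ≤ (n:ℝ) := Nat.cast_nonneg n
  push_cast
  nlinarith

lemma S_le_V {n k : ℕ} {p : ℝ} (hp0 : 0 < p) (hp1 : p < 1) (hk : (k:ℝ) ≤ p*(n:ℝ)) (a : ℕ) :
    B n k p / b n k p ≤ V n k p a ∧ (1 ≤ k → B n k p / b n k p < V n k p a) := by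
  have hq : (0:ℝ) < 1 - p := by linarith
  have hkn : (k:ℝ) ≤ (n:ℝ) := by nlinarith [Nat.cast_nonneg (α := ℝ) k]
  have hden : (0:ℝ) < p*(n:ℝ)+p-(k:ℝ)+(a:ℝ) := by
    have : (0:ℝ) ≤ (a:ℝ) := Nat.cast_nonneg a
    linarith
  rcases Nat.lt_or_ge k a with hak | hak
  · -- a > k : V a > a ≥ k+1 ≥ S
    have hSk : B n k p / b n k p ≤ ((k:ℝ)-((0:ℕ):ℝ)) + Gg n 0 p ∧
        (1 ≤ k → B n k p / b n k p < ((k:ℝ)-((0:ℕ):ℝ)) + Gg n 0 p) :=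
      S_le_shiftG k hp0 hp1 (Nat.zero_le k) hk
    rw [Gg_zero hp0] at hSk
    have hka : (k:ℝ) + 1 ≤ (a:ℝ) := by exact_mod_cast hak
    have hnum : (0:ℝ) < p*((n:ℝ)-(k:ℝ)+(a:ℝ)+1) := by
      have : (0:ℝ) ≤ (a:ℝ) := Nat.cast_nonneg a
      apply mul_pos hp0; linarith
    have hV : (k:ℝ) + 1 < V n (k:ℝ) p (a:ℝ) := by
      unfold V
      have := div_pos hnum hden
      linarith
    obtain ⟨h1, _⟩ := hSk
    constructor
    · push_cast at h1 ⊢; linarith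
    · intro _; push_cast at h1 ⊢; linarith
  · -- a ≤ k
    set j := k - a with hjdef
    have hcast : (j:ℝ) = (k:ℝ) - (a:ℝ) := by
      rw [hjdef, Nat.cast_sub hak]
    have hdj : (0:ℝ) < p*((n:ℝ)+1) - (j:ℝ) := by
      rw [hcast]
      have : (0:ℝ) ≤ (a:ℝ) := Nat.cast_nonneg a
      linarith
    have hVG : V n (k:ℝ) p (a:ℝ) = ((k:ℝ)-(j:ℝ)) + Gg n j p := by
      unfold V Gg
      rw [hcast]
      have h2 : p*((n:ℝ)+1)-((k:ℝ)-(a:ℝ)) ≠ 0 := by rw [hcast] at hdj; linarith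
      rw [show p*((n:ℝ)+1)-((k:ℝ)-(a:ℝ)) = p*(n:ℝ)+p-(k:ℝ)+(a:ℝ) by ring]
      ring
    obtain ⟨h1, h2⟩ := S_le_shiftG k hp0 hp1 (Nat.sub_le k a) hk (p := p) (j := j)
    rw [← hVG] at h1 h2
    exact ⟨h1, h2⟩

lemma V_form {n k : ℕ} {p : ℝ} (hp0 : 0 < p) (hk : (k:ℝ) ≤ p*(n:ℝ)) (a : ℝ) (ha : 0 ≤ a) :
    V n k p a = a + p + (p*(1-p)*((n:ℝ)+1)) / (a + (p*((n:ℝ)+1) - (k:ℝ))) := by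
  have hc : (0:ℝ) < p*((n:ℝ)+1) - (k:ℝ) := by nlinarith
  have hx : (0:ℝ) < a + (p*((n:ℝ)+1) - (k:ℝ)) := by linarith
  unfold V
  rw [show p*(n:ℝ)+p-(k:ℝ)+a = a + (p*((n:ℝ)+1) - (k:ℝ)) from by ring]
  rw [show p*((n:ℝ)-(k:ℝ)+a+1)
      = p * (a + (p*((n:ℝ)+1) - (k:ℝ))) + p*(1-p)*((n:ℝ)+1) from by ring]
  rw [add_div, mul_div_assoc, div_self hx.ne', mul_one, add_assoc]

lemma V_gt {n k : ℕ} {p : ℝ} (hp0 : 0 < p) (hp1 : p < 1) (hk : (k:ℝ) ≤ p*(n:ℝ)) (a : ℝ) (ha : 0 ≤ a) :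
    a + p < V n k p a := by
  rw [V_form hp0 hk a ha]
  have hc : (0:ℝ) < p*((n:ℝ)+1) - (k:ℝ) := by nlinarith
  have := div_pos (by nlinarith [Nat.cast_nonneg (α := ℝ) n] : (0:ℝ) < p*(1-p)*((n:ℝ)+1))
    (by linarith : (0:ℝ) < a + (p*((n:ℝ)+1) - (k:ℝ)))
  linarith

lemma V_bdd {n k : ℕ} {p : ℝ} (hp0 : 0 < p) (hp1 : p < 1) (hk : (k:ℝ) ≤ p*(n:ℝ)) :
    BddBelow (Set.range fun a : ℕ => V n k p (a:ℝ)) := by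
  refine ⟨0, ?_⟩
  rintro x ⟨a, rfl⟩
  have := V_gt hp0 hp1 hk (a:ℝ) (Nat.cast_nonneg a)
  have : (0:ℝ) ≤ (a:ℝ) := Nat.cast_nonneg a
  simp only
  nlinarith [V_gt hp0 hp1 hk (a:ℝ) (Nat.cast_nonneg a)]

lemma S_le_U {n k : ℕ} {p : ℝ} (hp0 : 0 < p) (hp1 : p < 1) (hk : (k:ℝ) ≤ p*(n:ℝ)) :
    B n k p / b n k p ≤ U n k p :=
  le_ciInf (fun a => (S_le_V hp0 hp1 hk a).1)

lemma U_exists_min {n k : ℕ} {p : ℝ} (hp0 : 0 < p) (hp1 : p < 1) (hk : (k:ℝ) ≤ p*(n:ℝ)) :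
    ∃ a0 : ℕ, ∀ a : ℕ, V n k p ((a0:ℕ):ℝ) ≤ V n k p ((a:ℕ):ℝ) := by
  set M := Nat.ceil (V n k p (((0:ℕ):ℕ):ℝ)) with hM
  obtain ⟨a0, ha0mem, hmin⟩ := Finset.exists_min_image (Finset.range (M+1))
    (fun a : ℕ => V n k p ((a:ℕ):ℝ)) ⟨0, Finset.mem_range.mpr (Nat.succ_pos M)⟩
  refine ⟨a0, fun a => ?_⟩
  rcases Nat.lt_or_ge a (M+1) with h | h
  · exact hmin a (Finset.mem_range.mpr h)
  · have h1 : V n k p (((0:ℕ):ℕ):ℝ) ≤ (M:ℝ) := Nat.le_ceil _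
    have h2 : (M:ℝ) ≤ (a:ℝ) := by exact_mod_cast Nat.le_of_succ_le h
    have h3 : (a:ℝ) + p > (a:ℝ) := by linarith
    have h4 := V_gt hp0 hp1 hk ((a:ℕ):ℝ) (Nat.cast_nonneg a)
    have h5 := hmin 0 (Finset.mem_range.mpr (Nat.succ_pos M))
    linarith

lemma S_lt_U {n k : ℕ} {p : ℝ} (hp0 : 0 < p) (hp1 : p < 1) (hk : (k:ℝ) ≤ p*(n:ℝ))
    (hk1 : 1 ≤ k) : B n k p / b n k p < U n k p := by
  obtain ⟨a0, ha0⟩ := U_exists_min hp0 hp1 hk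
  have h1 : V n k p ((a0:ℕ):ℝ) ≤ U n k p := le_ciInf ha0
  have h2 := (S_le_V hp0 hp1 hk a0).2 hk1
  linarith

set_option maxHeartbeats 1000000 in
lemma U_lt_2L {n k : ℕ} {p : ℝ} (hn : 0 < n) (hp0 : 0 < p) (hp1 : p < 1)
    (hk : (k:ℝ) ≤ p*(n:ℝ)) : U n k p < 2 * L n k p := by
  have hq : (0:ℝ) < 1 - p := by linarith
  have hk0 : (0:ℝ) ≤ (k:ℝ) := Nat.cast_nonneg k
  have hn1 : (0:ℝ) < (n:ℝ)+1 := by positivity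
  set c : ℝ := p*((n:ℝ)+1) - (k:ℝ) with hc_def
  set D : ℝ := p*(1-p)*((n:ℝ)+1) with hD_def
  have hc : 0 < c := by rw [hc_def]; nlinarith
  have hD : 0 < D := by rw [hD_def]; positivity
  have hcp : p ≤ c := by rw [hc_def]; nlinarith
  have hDck : D = (1-p)*(c + (k:ℝ)) := by rw [hD_def, hc_def]; ring
  have h2L : 2 * L n k p
      = ((k:ℝ)+1-p*(n:ℝ)) + Real.sqrt ((p*(n:ℝ)-(k:ℝ)+1)^2 + 4*(1-p)*(k:ℝ)) := by
    unfold L; ring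
  have hE : (k:ℝ)+1-p*(n:ℝ) = 1 + p - c := by rw [hc_def]; ring
  have harg : (p*(n:ℝ)-(k:ℝ)+1)^2 + 4*(1-p)*(k:ℝ) = 4*D + (c+p-1)^2 := by
    rw [hc_def, hD_def]; ring
  have harg_pos : (0:ℝ) < (p*(n:ℝ)-(k:ℝ)+1)^2 + 4*(1-p)*(k:ℝ) := by
    rw [harg]; nlinarith [sq_nonneg (c+p-1)]
  set S : ℝ := Real.sqrt ((p*(n:ℝ)-(k:ℝ)+1)^2 + 4*(1-p)*(k:ℝ)) with hS_def
  have hS_pos : 0 < S := Real.sqrt_pos.mpr harg_pos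
  have hsqrt4D : Real.sqrt (4*D) = 2*Real.sqrt D := by
    rw [show (4:ℝ)*D = 2^2*D from by ring, Real.sqrt_mul (by norm_num) D,
      Real.sqrt_sq (by norm_num : (0:ℝ) ≤ 2)]
  have hS_ge : 2*Real.sqrt D ≤ S := by
    rw [hS_def, harg, ← hsqrt4D]
    exact Real.sqrt_le_sqrt (by nlinarith [sq_nonneg (c+p-1)])
  rcases le_or_gt D (c^2) with hDc | hDc
  · -- case A : minimizer at a = 0
    have hU0 : U n k p ≤ V n k p (((0:ℕ)):ℝ) := ciInf_le (V_bdd hp0 hp1 hk) 0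
    have hV0 : V n k p (((0:ℕ)):ℝ) = p + D/c := by
      rw [V_form hp0 hk _ (by norm_num)]
      rw [hc_def, hD_def]
      norm_num
    set t : ℝ := D/c with ht_def
    have ht0 : 0 < t := div_pos hD hc
    have htD : D = t*c := by rw [ht_def]; field_simp
    have htc : t ≤ c := by rw [ht_def, div_le_iff₀ hc]; nlinarith
    have hqlec : 1 - p ≤ c := by nlinarith
    have hDge : (1-p)*c ≤ t*c := by
      rw [← htD, hDck]; nlinarith
    have hmain : t + c - 1 < S := by
      rcases lt_or_ge (t + c - 1) 0 with hneg | hpos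
      · linarith
      · have hsq : (t+c-1)^2 < 4*D + (c+p-1)^2 := by
          have e1 : t*t ≤ t*c := mul_le_mul_of_nonneg_left htc ht0.le
          have e2 : (0:ℝ) ≤ c*(1+p) + p^2 - 2*p := by
            rcases le_or_gt p (1/2) with hh | hh
            · nlinarith [mul_le_mul_of_nonneg_right hqlec (by linarith : (0:ℝ) ≤ 1+p)]
            · nlinarith [mul_le_mul_of_nonneg_right hcp (by linarith : (0:ℝ) ≤ 1+p)]
          rw [htD]
          nlinarith [ht0, e1, e2, hDge]
        have := Real.sqrt_lt_sqrt (sq_nonneg (t+c-1)) (by rw [← harg] at hsq; exact hsq)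
        rwa [Real.sqrt_sq hpos] at this
    have hfin : p + D/c < 2 * L n k p := by
      rw [h2L, hE]
      have ht' : t = D/c := ht_def
      linarith
    linarith
  · -- case B : minimizer near sqrt D - c
    set s : ℝ := Real.sqrt D with hs_def
    have hs2 : s^2 = D := Real.sq_sqrt hD.le
    have hs0 : 0 < s := Real.sqrt_pos.mpr hD
    have hcs : c < s := by
      have := Real.sqrt_lt_sqrt (sq_nonneg c) hDc
      rwa [Real.sqrt_sq hc.le] at this
    set a0 : ℕ := Nat.ceil (s - c) with ha0_def
    have ha1 : s - c ≤ (a0:ℝ) := Nat.le_ceil _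
    have ha2 : (a0:ℝ) < (s - c) + 1 := by
      apply Nat.ceil_lt_add_one; linarith
    set x : ℝ := (a0:ℝ) + c with hx_def
    have hx1 : s ≤ x := by rw [hx_def]; linarith
    have hx2 : x < s + 1 := by rw [hx_def]; linarith
    have hx0 : 0 < x := by linarith
    have hUa : U n k p ≤ V n k p ((a0:ℕ):ℝ) := ciInf_le (V_bdd hp0 hp1 hk) a0
    have hVa : V n k p ((a0:ℕ):ℝ) = (a0:ℝ) + p + D/x := by
      rw [V_form hp0 hk _ (Nat.cast_nonneg a0), hx_def, hc_def, hD_def]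
    have hdiv : D/x < 1 + 2*s - x := by
      rw [div_lt_iff₀ hx0]
      have h5 : (x-s)*(x-s) ≤ (x-s)*1 := by
        apply mul_le_mul_of_nonneg_left _ (by linarith)
        linarith
      nlinarith
    have hfin : V n k p ((a0:ℕ):ℝ) < 2 * L n k p := by
      rw [hVa, h2L, hE]
      have hxa : (a0:ℝ) = x - c := by rw [hx_def]; ring
      rw [hxa]
      linarith
    linarith

lemma one_le_L {nr kr p : ℝ} (hp0 : 0 < p) (hp1 : p < 1) (hk0 : 0 ≤ kr) (hk : kr ≤ p*nr) :
    1 ≤ L nr kr p ∧ (0 < kr → 1 < L nr kr p) := by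
  have hq : (0:ℝ) < 1 - p := by linarith
  have hbase : (0:ℝ) ≤ p*nr - kr + 1 := by linarith
  have h1 : Real.sqrt ((p*nr - kr + 1)^2) ≤ Real.sqrt ((p*nr - kr + 1)^2 + 4*(1-p)*kr) :=
    Real.sqrt_le_sqrt (by nlinarith)
  rw [Real.sqrt_sq hbase] at h1
  constructor
  · unfold L; linarith
  · intro hkpos
    have h2 : Real.sqrt ((p*nr - kr + 1)^2) < Real.sqrt ((p*nr - kr + 1)^2 + 4*(1-p)*kr) :=
      Real.sqrt_lt_sqrt (sq_nonneg _) (by nlinarith)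
    rw [Real.sqrt_sq hbase] at h2
    unfold L; linarith

lemma L_zero {nr p : ℝ} (hp0 : 0 < p) (hnr : 0 ≤ p * nr) : L nr 0 p = 1 := by
  unfold L
  rw [show (p*nr - 0 + 1)^2 + 4*(1-p)*0 = (p*nr+1)^2 from by ring]
  rw [Real.sqrt_sq (by linarith)]
  ring

set_option maxHeartbeats 2000000 in
lemma keylem {nr kr p : ℝ} (hp0 : 0 < p) (hp1 : p < 1) (hk0 : 0 ≤ kr)
    (hK : kr + 1 ≤ p*nr) :
    L nr (kr+1) p ≤ 1 + ((kr+1)*(1-p)/((nr-kr)*p)) * L nr kr p := by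
  have hq : (0:ℝ) < 1 - p := by linarith
  have hnr : 0 < nr := by nlinarith
  have hpn_n : p * nr < nr := by nlinarith
  have hnk : 0 < nr - kr := by nlinarith
  have hw : 0 < (nr - kr) * p := mul_pos hnk hp0
  set w : ℝ := (nr - kr) * p with hw_def
  set m : ℝ := p*nr - kr - 1 with hm_def
  have hm : 0 ≤ m := by rw [hm_def]; linarith
  -- facts about L' = L nr kr p
  have hA2 : (0:ℝ) ≤ (p*nr - kr + 1)^2 + 4*(1-p)*kr := by positivity
  set S2 : ℝ := Real.sqrt ((p*nr - kr + 1)^2 + 4*(1-p)*kr) with hS2_def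
  have hS2sq : S2^2 = (p*nr - kr + 1)^2 + 4*(1-p)*kr := Real.sq_sqrt hA2
  have hS2ge : p*nr - kr + 1 ≤ S2 := by
    have h1 : Real.sqrt ((p*nr - kr + 1)^2) ≤ S2 := Real.sqrt_le_sqrt (by nlinarith)
    rwa [Real.sqrt_sq (by linarith)] at h1
  have hL2 : L nr kr p = (kr + 1 - p*nr + S2)/2 := by unfold L; rfl
  set L2 : ℝ := L nr kr p with hL2_def
  have hS2L : S2 = 2*L2 + m := by rw [hL2, hm_def]; ring
  have hL2one : 1 ≤ L2 := by rw [hL2]; have := hS2ge; linarith [hm]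
  have hL2sq : L2^2 = -m*L2 + w := by
    have h1 : (2*L2 + m)^2 = (p*nr - kr + 1)^2 + 4*(1-p)*kr := by
      rw [← hS2L]; exact hS2sq
    have h2 : w = (nr - kr)*p := hw_def
    nlinarith [h1]
  -- the SOS certificate
  set K : ℝ := kr + 1 with hK_def
  have hKpos : (0:ℝ) < K := by rw [hK_def]; linarith
  set α : ℝ := (1+m)*w - K*(1-p)*m with hα_def
  set β : ℝ := w*(w - K*(1-p)) with hβ_def
  have hα : 0 < α := by
    rw [hα_def, hw_def, hm_def, hK_def]
    nlinarith [mul_pos hp0 hq, mul_pos hnk hp0]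
  have hSOS : α^2 * ((p*nr - kr + 1)^2 + 4*(1-p)*kr) - (2*β + m*α)^2
      = 4*(1-p)*p*(nr+1)*w^2 := by
    rw [hα_def, hβ_def, hw_def, hm_def, hK_def]
    ring
  have hX : 2*β + m*α ≤ α * S2 := by
    nlinarith [hSOS, hS2sq, mul_nonneg hα.le (Real.sqrt_nonneg ((p*nr - kr + 1)^2 + 4*(1-p)*kr)),
      mul_pos (mul_pos (mul_pos (by linarith : (0:ℝ) < 4*(1-p)) hp0) (by linarith : (0:ℝ) < nr+1)) (pow_pos hw 2)]
  have hαL2 : β ≤ α * L2 := by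
    have : α * S2 = 2*(α*L2) + m*α := by rw [hS2L]; ring
    linarith
  -- key quadratic bound
  have key2 : w^2 ≤ (1+m)*w*L2 + K*(1-p)*L2^2 := by
    have h3 : K*(1-p)*L2^2 = K*(1-p)*(-m*L2 + w) := by rw [hL2sq]
    have h4 : ((1+m)*w - K*(1-p)*m)*L2 ≥ w*(w - K*(1-p)) := by
      rw [← hα_def, ← hβ_def]; linarith
    nlinarith [h3, h4]
  -- transfer through the division
  set u : ℝ := K*(1-p)*L2/w with hu_def
  have hu0 : 0 ≤ u := by
    rw [hu_def]
    positivity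
  have huw : u*w = K*(1-p)*L2 := by rw [hu_def]; field_simp
  have h6 : (1-p)*K*w^2 ≤ (u*(m+1)+u^2)*w^2 := by
    have e : (u*(m+1)+u^2)*w^2 = K*(1-p)*((1+m)*w*L2 + K*(1-p)*L2^2) := by
      rw [hu_def]; field_simp; ring
    rw [e]
    have := mul_le_mul_of_nonneg_left key2 (by positivity : (0:ℝ) ≤ K*(1-p))
    linarith
  have h7 : (1-p)*K ≤ u*(m+1)+u^2 :=
    le_of_mul_le_mul_right (by nlinarith [h6]) (pow_pos hw 2)
  -- bound the sqrt
  have h8 : Real.sqrt ((p*nr - (kr+1) + 1)^2 + 4*(1-p)*(kr+1)) ≤ m + 1 + 2*u := by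
    have harg1 : (p*nr - (kr+1) + 1)^2 + 4*(1-p)*(kr+1) = (m+1)^2 + 4*(1-p)*K := by
      rw [hm_def, hK_def]; ring
    have hb : (m+1)^2 + 4*(1-p)*K ≤ (m+1+2*u)^2 := by linear_combination 4 * h7
    rw [harg1]
    calc Real.sqrt ((m+1)^2 + 4*(1-p)*K) ≤ Real.sqrt ((m+1+2*u)^2) := Real.sqrt_le_sqrt hb
      _ = m+1+2*u := Real.sqrt_sq (by linarith)
  -- finish
  have hLup : L nr (kr+1) p = ((kr+1) + 1 - p*nr
      + Real.sqrt ((p*nr - (kr+1) + 1)^2 + 4*(1-p)*(kr+1)))/2 := by unfold L; rfl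
  rw [hLup]
  have hufin : ((kr+1)*(1-p)/((nr-kr)*p)) * L2 = u := by
    rw [hu_def, hK_def, hw_def]
    ring
  rw [hufin]
  have : (kr+1) + 1 - p*nr = 1 - m := by rw [hm_def]; ring
  rw [this]
  linarith

lemma L1_lt {nr p : ℝ} (hp0 : 0 < p) (hp1 : p < 1) (h1 : 1 ≤ p*nr) :
    L nr (0+1) p < 1 + ((0+1)*(1-p)/((nr-0)*p)) * 1 := by
  norm_num
  have hq : (0:ℝ) < 1 - p := by linarith
  set c : ℝ := p*nr with hc_def
  have hc : (0:ℝ) < c := by linarith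
  have h2 : (c + 2*(1-p)/c)^2 = c^2 + 4*(1-p) + 4*(1-p)^2/c^2 := by
    field_simp; ring
  have h3 : Real.sqrt ((p*nr - 1 + 1)^2 + 4*(1-p)*1) < c + 2*(1-p)/c := by
    have harg : (p*nr - 1 + 1)^2 + 4*(1-p)*1 = c^2 + 4*(1-p) := by rw [hc_def]; ring

    rw [harg]
    have hlt : c^2 + 4*(1-p) < (c + 2*(1-p)/c)^2 := by
      rw [h2]
      have : 0 < 4*(1-p)^2/c^2 := by positivity
      linarith
    have h4 : Real.sqrt (c^2 + 4*(1-p)) < Real.sqrt ((c + 2*(1-p)/c)^2) :=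
      Real.sqrt_lt_sqrt (by positivity) hlt
    rwa [Real.sqrt_sq (by positivity)] at h4
  have h5 : (1-p)/(nr*p) = (1-p)/c := by
    rw [hc_def]; ring_nf
  rw [h5]
  unfold L
  linarith [h3, (by ring : 2*(1-p)/c = 2*((1-p)/c)), hc_def]

lemma L_le_S : ∀ (k : ℕ) {n : ℕ} {p : ℝ}, 0 < p → p < 1 → (k:ℝ) ≤ p*(n:ℝ) →
    (L n k p ≤ B n k p / b n k p ∧ (1 ≤ k → L n k p < B n k p / b n k p)) := by
  intro k
  induction k with
  | zero =>
    intro n p hp0 hp1 hk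
    have h0 : ((0:ℕ):ℝ) = (0:ℝ) := Nat.cast_zero
    constructor
    · rw [h0, L_zero hp0 (by exact_mod_cast hk), S_zero hp0 hp1]
    · intro h; omega
  | succ k ih =>
    intro n p hp0 hp1 hk
    have hq : (0:ℝ) < 1 - p := by linarith
    have hk1 : ((k:ℝ)+1) ≤ p*n := by push_cast at hk; linarith
    have hkpn : (k:ℝ) ≤ p*n := by linarith
    have hn0 : (0:ℝ) < (n:ℝ) := by nlinarith
    have hkn : (k:ℝ) + 1 < (n:ℝ) := by nlinarith
    have hjn : k < n := by exact_mod_cast (by linarith : (k:ℝ) < (n:ℝ))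
    have hnk : (0:ℝ) < (n:ℝ) - (k:ℝ) := by linarith
    have hr : (0:ℝ) < ((k:ℝ)+1)*(1-p)/(((n:ℝ)-(k:ℝ))*p) := by positivity
    have hrec := S_rec hp0 hp1 hjn (p := p)
    have hkey := keylem (nr := (n:ℝ)) (kr := (k:ℝ)) hp0 hp1 (Nat.cast_nonneg k) hk1
    have hcast : ((k+1:ℕ):ℝ) = (k:ℝ)+1 := by push_cast; ring
    obtain ⟨ihle, ihlt⟩ := ih hp0 hp1 hkpn
    have hmain : L (n:ℝ) ((k:ℝ)+1) p < B n (k+1) p / b n (k+1) p := by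
      rcases Nat.eq_zero_or_pos k with hk0 | hk0
      · subst hk0
        have hS0 : B n 0 p / b n 0 p = 1 := S_zero hp0 hp1
        rw [hrec, hS0]
        have hL1 := L1_lt (nr := (n:ℝ)) hp0 hp1 (by push_cast at hk1; linarith)
        push_cast
        convert hL1 using 3 <;> norm_num
      · have hlt := ihlt hk0
        have h2 : 1 + (((k:ℝ)+1)*(1-p)/(((n:ℝ)-(k:ℝ))*p)) * L (n:ℝ) (k:ℝ) p
            < 1 + (((k:ℝ)+1)*(1-p)/(((n:ℝ)-(k:ℝ))*p)) * (B n k p / b n k p) := by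
          have := mul_lt_mul_of_pos_left hlt hr
          linarith
        rw [hrec]
        linarith
    rw [hcast]
    exact ⟨hmain.le, fun _ => hmain⟩

lemma V0_lt {n k : ℕ} {p : ℝ} (hp0 : 0 < p) (hp1 : p < 1) (hn : 0 < n)
    (hk1 : 1 ≤ k) (hklt : (k:ℝ) < p*(n:ℝ)) :
    V n k p 0 < (1 - (k:ℝ)/(n:ℝ))*p/(p - (k:ℝ)/(n:ℝ)) := by
  have hq : (0:ℝ) < 1 - p := by linarith
  have hn0 : (0:ℝ) < (n:ℝ) := by exact_mod_cast hn
  have hk0 : (0:ℝ) < (k:ℝ) := by exact_mod_cast hk1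
  have h2 : (0:ℝ) < p*(n:ℝ) - (k:ℝ) := by linarith
  have h3 : (0:ℝ) < p - (k:ℝ)/(n:ℝ) := by
    rw [sub_pos, div_lt_iff₀ hn0]; linarith
  have hd : (0:ℝ) < p*(n:ℝ) + p - (k:ℝ) := by linarith
  have hRW : (1 - (k:ℝ)/(n:ℝ))*p/(p - (k:ℝ)/(n:ℝ)) = p*((n:ℝ)-(k:ℝ))/(p*(n:ℝ)-(k:ℝ)) := by
    rw [div_eq_div_iff h3.ne' h2.ne']
    have hg : (k:ℝ)/(n:ℝ)*(n:ℝ) = (k:ℝ) := div_mul_cancel₀ _ hn0.ne'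
    linear_combination (p*(1-p)) * hg
  have hV0 : V n k p 0 = p*((n:ℝ)-(k:ℝ)+1)/(p*(n:ℝ)+p-(k:ℝ)) := by
    unfold V; norm_num
  rw [hRW, hV0, div_lt_div_iff₀ hd h2]
  nlinarith [mul_pos (mul_pos hp0 hk0) hq]

theorem binomial_ratio_bounds
    (k n : ℕ) (hn : 0 < n) (p : ℝ) (hp0 : 0 < p) (hp1 : p < 1)
    (hk : (k : ℝ) ≤ p * n) :
    (1 ≤ L n k p ∧ L n k p ≤ B n k p / b n k p ∧
      B n k p / b n k p ≤ U n k p ∧ U n k p < 2 * L n k p) ∧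
    (1 ≤ k →
      (1 < L n k p ∧ L n k p < B n k p / b n k p ∧
        B n k p / b n k p < U n k p ∧ U n k p < 2 * L n k p)) ∧
    (0 < (k : ℝ) / n → (k : ℝ) / n < p →
      (1 < L n k p ∧ L n k p < B n k p / b n k p ∧
        B n k p / b n k p < U n k p ∧ U n k p ≤ V n k p 0 ∧
        V n k p 0 < (1 - (k : ℝ) / n) * p / (p - (k : ℝ) / n))) := by
  have hn0 : (0:ℝ) < (n:ℝ) := by exact_mod_cast hn
  have hU2L := U_lt_2L hn hp0 hp1 hk
  have hL := one_le_L (nr := (n:ℝ)) (kr := (k:ℝ)) hp0 hp1 (Nat.cast_nonneg k) hk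
  have hLS := L_le_S k hp0 hp1 hk
  refine ⟨⟨hL.1, hLS.1, S_le_U hp0 hp1 hk, hU2L⟩, ?_, ?_⟩
  · intro hk1
    have hk0 : (0:ℝ) < (k:ℝ) := by exact_mod_cast hk1
    exact ⟨hL.2 hk0, hLS.2 hk1, S_lt_U hp0 hp1 hk hk1, hU2L⟩
  · intro hf0 hf1
    have hk1 : 1 ≤ k := by
      by_contra h
      have : k = 0 := by omega
      subst this
      norm_num at hf0
    have hk0 : (0:ℝ) < (k:ℝ) := by exact_mod_cast hk1
    have hklt : (k:ℝ) < p*(n:ℝ) := by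
      rw [div_lt_iff₀ hn0] at hf1; linarith
    have hUV0 : U n k p ≤ V n k p 0 := by
      have := ciInf_le (V_bdd hp0 hp1 hk) 0
      simpa [U] using this
    exact ⟨hL.2 hk0, hLS.2 hk1, S_lt_U hp0 hp1 hk hk1, hUV0,
      V0_lt hp0 hp1 hn hk1 hklt⟩
end

section
/- Let n, k be positive integers and 0 < p < 1 with k ≤ p·n. Then B↓_{n,k}(p) < B_{n,k}(p) < B↑_{n,k}(p) < (89/44)·B↓_{n,k}(p). -/
open Real
open Stirling Filter Topology

/-- Relative entropy `D(f‖p)`. -/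
noncomputable def D (f p : ℝ) : ℝ :=
  f * Real.log (f / p) + (1 - f) * Real.log ((1 - f) / (1 - p))

/-- The lower bound `B↓_{n,k}(p)`. -/
noncomputable def Bdown (n k : ℕ) (p : ℝ) : ℝ :=
  Real.sqrt n * L n k p / Real.sqrt (2 * Real.pi * k * ((n : ℝ) - k)) *
    Real.exp (-(n * D ((k : ℝ) / n) p)) *
    Real.exp (1 / (12 * n) - 1 / (12 * k) - 1 / (12 * ((n : ℝ) - k)))

/-- The upper bound `B↑_{n,k}(p)`. -/
noncomputable def Bup (n k : ℕ) (p : ℝ) : ℝ :=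
  Real.sqrt n * U n k p / Real.sqrt (2 * Real.pi * k * ((n : ℝ) - k)) *
    Real.exp (-(n * D ((k : ℝ) / n) p)) *
    Real.exp (1 / (12 * n + 1) - 1 / (12 * k + 1) - 1 / (12 * ((n : ℝ) - k) + 1))


namespace BinTail

noncomputable def dd (m : ℕ) : ℝ := Real.log (stirlingSeq m)

lemma pow3 (k : ℕ) : (2*(k:ℝ)+3) ≤ 3^(k+1) := by
  induction k with
  | zero => norm_num
  | succ i ih =>
    have h3 : (3:ℝ)^(i+1+1) = 3 * 3^(i+1) := by ring
    rw [h3]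
    push_cast
    push_cast at ih
    nlinarith [ih]

lemma step_lt (m : ℕ) :
    dd (m+1) - dd (m+2) < 1/(12*((m:ℝ)+1)) - 1/(12*((m:ℝ)+2)) := by
  set X : ℝ := (1 / (2 * (↑(m + 1):ℝ) + 1)) ^ 2 with hXdef
  have hm0 : (0:ℝ) < (m:ℝ) + 1 := by positivity
  have hX0 : 0 < X := by positivity
  have hbase : (1:ℝ) / (2 * (↑(m + 1):ℝ) + 1) < 1 := by
    rw [div_lt_one (by positivity)]
    push_cast; nlinarith [Nat.cast_nonneg (α := ℝ) m]
  have hX1 : X < 1 := by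
    rw [hXdef]
    calc (1 / (2 * (↑(m + 1):ℝ) + 1)) ^ 2 < 1^2 := by
          apply pow_lt_pow_left₀ hbase (by positivity)
          norm_num
      _ = 1 := one_pow 2
  have hgeo : HasSum (fun k : ℕ => X/3 * X^k) (X/3 * (1-X)⁻¹) :=
    (hasSum_geometric_of_lt_one hX0.le hX1).mul_left _
  have hgeo' : HasSum (fun k : ℕ => (1/3:ℝ) * X^(k+1)) (X/3 * (1-X)⁻¹) := by
    convert hgeo using 2 with k
    ring
  have hlt : dd (m+1) - dd (m+2) < X/3 * (1-X)⁻¹ := by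
    refine hasSum_lt (f := fun k : ℕ => 1 / (2 * (↑(k + 1):ℝ) + 1) * X ^ (k + 1))
      (i := 1) ?_ ?_ (log_stirlingSeq_diff_hasSum m) hgeo'
    · intro k
      dsimp only
      have h1 : (1:ℝ) / (2 * (↑(k + 1):ℝ) + 1) ≤ 1/3 := by
        apply one_div_le_one_div_of_le
        · norm_num
        · push_cast; linarith [Nat.cast_nonneg (α := ℝ) k]
      exact mul_le_mul_of_nonneg_right h1 (by positivity)
    · norm_num
      nlinarith [pow_pos hX0 2]
  have key : X/3 * (1-X)⁻¹ = 1/(12*((m:ℝ)+1)) - 1/(12*((m:ℝ)+2)) := by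
    have hX1' : (0:ℝ) < 1 - X := by linarith
    have hd : (0:ℝ) < (2 * ((m:ℝ) + 1) + 1) := by positivity
    have e1 : X/3 * (1-X)⁻¹ = (X/3)/(1-X) := (div_eq_mul_inv _ _).symm
    have e2 : 1/(12*((m:ℝ)+1)) - 1/(12*((m:ℝ)+2)) = 1/(12*((m:ℝ)+1)*((m:ℝ)+2)) := by
      field_simp
      ring
    rw [e1, e2, div_eq_div_iff hX1'.ne' (by positivity), hXdef]
    push_cast
    field_simp
    ring
  rw [key] at hlt
  exact hlt

lemma step_gt (m : ℕ) :
    1/(12*((m:ℝ)+1)+1) - 1/(12*((m:ℝ)+2)+1) < dd (m+1) - dd (m+2) := by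
  set X : ℝ := (1 / (2 * (↑(m + 1):ℝ) + 1)) ^ 2 with hXdef
  have hm0 : (0:ℝ) < (m:ℝ) + 1 := by positivity
  have hX0 : 0 < X := by positivity
  have hbase : (1:ℝ) / (2 * (↑(m + 1):ℝ) + 1) < 1 := by
    rw [div_lt_one (by positivity)]
    push_cast; nlinarith [Nat.cast_nonneg (α := ℝ) m]
  have hX1 : X < 1 := by
    rw [hXdef]
    calc (1 / (2 * (↑(m + 1):ℝ) + 1)) ^ 2 < 1^2 := by
          apply pow_lt_pow_left₀ hbase (by positivity)
          norm_num
      _ = 1 := one_pow 2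
  have hgeo : HasSum (fun k : ℕ => X/3 * (X/3)^k) (X/3 * (1-X/3)⁻¹) :=
    (hasSum_geometric_of_lt_one (by positivity) (by linarith)).mul_left _
  have hgeo' : HasSum (fun k : ℕ => (X/3:ℝ)^(k+1)) (X/3 * (1-X/3)⁻¹) := by
    convert hgeo using 2 with k
    ring
  have hlt : X/3 * (1-X/3)⁻¹ < dd (m+1) - dd (m+2) := by
    refine hasSum_lt (g := fun k : ℕ => 1 / (2 * (↑(k + 1):ℝ) + 1) * X ^ (k + 1))
      (i := 1) ?_ ?_ hgeo' (log_stirlingSeq_diff_hasSum m)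
    · intro k
      dsimp only
      have h3 : ((X/3:ℝ))^(k+1) = X^(k+1) / 3^(k+1) := div_pow X 3 (k+1)
      rw [h3, div_le_iff₀ (by positivity)]
      have h4 : (2*(↑(k+1):ℝ)+1) ≤ 3^(k+1) := by
        have := pow3 k; push_cast; push_cast at this; linarith
      have h5 : (0:ℝ) < 2*(↑(k+1):ℝ)+1 := by positivity
      rw [one_div, inv_mul_eq_div, div_mul_eq_mul_div, le_div_iff₀ h5]
      nlinarith [pow_pos hX0 (k+1)]
    · norm_num
      have h3 : ((X/3:ℝ))^2 = X^2/9 := by ring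
      rw [h3]
      nlinarith [pow_pos hX0 2]
  refine lt_of_le_of_lt ?_ hlt
  set M : ℝ := (m:ℝ) + 1 with hM
  have hM1 : (1:ℝ) ≤ M := by rw [hM]; linarith [Nat.cast_nonneg (α := ℝ) m]
  have key : X/3 * (1-X/3)⁻¹ = 1/(12*M^2+12*M+2) := by
    have hX3 : (0:ℝ) < 1 - X/3 := by linarith
    have hd : (0:ℝ) < (2 * M + 1) := by positivity
    have hXM : X = (1/(2*M+1))^2 := by rw [hXdef, hM]; push_cast; ring
    have e1 : X/3 * (1-X/3)⁻¹ = (X/3)/(1-X/3) := (div_eq_mul_inv _ _).symm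
    rw [e1, div_eq_div_iff hX3.ne' (by positivity), hXM]
    field_simp
    ring
  rw [key]
  have h2 : ((m:ℝ)+2) = M + 1 := by rw [hM]; ring
  rw [h2]
  rw [div_sub_div _ _ (by positivity) (by positivity),
    div_le_div_iff₀ (by positivity) (by positivity)]
  nlinarith [sq_nonneg M, hM1]

lemma step_lt' (m : ℕ) :
    dd (m+1) - dd (m+2) < 1/(12*((m+1:ℕ):ℝ)) - 1/(12*((m+2:ℕ):ℝ)) := by
  have := step_lt m; push_cast; push_cast at this; linarith

lemma step_gt' (m : ℕ) :
    1/(12*((m+1:ℕ):ℝ)+1) - 1/(12*((m+2:ℕ):ℝ)+1) < dd (m+1) - dd (m+2) := by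
  have := step_gt m; push_cast; push_cast at this; linarith

lemma dd_tendsto : Tendsto dd atTop (𝓝 (Real.log (Real.sqrt π))) :=
  tendsto_stirlingSeq_sqrt_pi.log (by positivity)

lemma aux_tendsto (c : ℝ) : Tendsto (fun j : ℕ => 1/(12*((j:ℝ)+c)+1)) atTop (𝓝 0) := by
  have h1 : Tendsto (fun j : ℕ => 12*((j:ℝ)+c)+1) atTop atTop := by
    apply tendsto_atTop_add_const_right
    apply Tendsto.const_mul_atTop (by norm_num : (0:ℝ) < 12)
    exact tendsto_atTop_add_const_right _ c tendsto_natCast_atTop_atTop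
  have h2 : Tendsto (fun j : ℕ => (12*((j:ℝ)+c)+1)⁻¹) atTop (𝓝 0) :=
    tendsto_inv_atTop_zero.comp h1
  simpa [one_div] using h2

lemma aux_tendsto' (c : ℝ) : Tendsto (fun j : ℕ => 1/(12*((j:ℝ)+c))) atTop (𝓝 0) := by
  have h1 : Tendsto (fun j : ℕ => 12*((j:ℝ)+c)) atTop atTop := by
    apply Tendsto.const_mul_atTop (by norm_num : (0:ℝ) < 12)
    exact tendsto_atTop_add_const_right _ c tendsto_natCast_atTop_atTop
  have h2 : Tendsto (fun j : ℕ => (12*((j:ℝ)+c))⁻¹) atTop (𝓝 0) :=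
    tendsto_inv_atTop_zero.comp h1
  simpa [one_div] using h2

noncomputable def rr (m : ℕ) : ℝ := dd m - Real.log (Real.sqrt π)

lemma rr_lt (m : ℕ) (hm : 1 ≤ m) : rr m < 1/(12*(m:ℝ)) := by
  obtain ⟨i, rfl⟩ : ∃ i, m = i + 1 := ⟨m - 1, by omega⟩
  set φ : ℕ → ℝ := fun j => dd (j+(i+1)) - 1/(12*((j+(i+1):ℕ):ℝ)) with hφ
  have hmono : Monotone φ := by
    apply monotone_nat_of_le_succ
    intro j
    have hs := step_lt' (i+j)
    have e1 : j + (i+1) = (i+j) + 1 := by omega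
    have e2 : (j+1) + (i+1) = (i+j) + 2 := by omega
    rw [hφ]; dsimp only; rw [e1, e2]
    linarith
  have htend : Tendsto φ atTop (𝓝 (Real.log (Real.sqrt π))) := by
    have h1 : Tendsto (fun j : ℕ => dd (j + (i+1))) atTop (𝓝 (Real.log (Real.sqrt π))) :=
      dd_tendsto.comp (tendsto_add_atTop_nat (i+1))
    have h2 := aux_tendsto' ((i:ℝ)+1)
    have h3 := h1.sub h2
    rw [sub_zero] at h3
    have hfe : φ = (fun x : ℕ => dd (x + (i+1)) - 1/(12*((x:ℝ)+((i:ℝ)+1)))) := by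
      funext j; rw [hφ]; push_cast; ring
    rw [hfe]
    exact h3
  have h0 : φ 0 < φ 1 := by
    have hs := step_lt' i
    have e1 : 0 + (i+1) = i + 1 := by omega
    have e2 : 1 + (i+1) = i + 2 := by omega
    rw [hφ]; dsimp only; rw [e1, e2]
    linarith
  have h1 := hmono.ge_of_tendsto htend 1
  have h2 : φ 0 < Real.log (Real.sqrt π) := lt_of_lt_of_le h0 h1
  rw [hφ] at h2
  dsimp only at h2
  rw [show 0 + (i+1) = i+1 from by omega] at h2
  rw [rr]
  linarith

lemma rr_gt (m : ℕ) (hm : 1 ≤ m) : 1/(12*(m:ℝ)+1) < rr m := by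
  obtain ⟨i, rfl⟩ : ∃ i, m = i + 1 := ⟨m - 1, by omega⟩
  set φ : ℕ → ℝ := fun j => dd (j+(i+1)) - 1/(12*((j+(i+1):ℕ):ℝ)+1) with hφ
  have hanti : Antitone φ := by
    apply antitone_nat_of_succ_le
    intro j
    have hs := step_gt' (i+j)
    have e1 : j + (i+1) = (i+j) + 1 := by omega
    have e2 : (j+1) + (i+1) = (i+j) + 2 := by omega
    rw [hφ]; dsimp only; rw [e1, e2]
    linarith
  have htend : Tendsto φ atTop (𝓝 (Real.log (Real.sqrt π))) := by
    have h1 : Tendsto (fun j : ℕ => dd (j + (i+1))) atTop (𝓝 (Real.log (Real.sqrt π))) :=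
      dd_tendsto.comp (tendsto_add_atTop_nat (i+1))
    have h2 := aux_tendsto ((i:ℝ)+1)
    have h3 := h1.sub h2
    rw [sub_zero] at h3
    have hfe : φ = (fun x : ℕ => dd (x + (i+1)) - 1/(12*((x:ℝ)+((i:ℝ)+1))+1)) := by
      funext j; rw [hφ]; push_cast; ring
    rw [hfe]
    exact h3
  have h0 : φ 1 < φ 0 := by
    have hs := step_gt' i
    have e1 : 0 + (i+1) = i + 1 := by omega
    have e2 : 1 + (i+1) = i + 2 := by omega
    rw [hφ]; dsimp only; rw [e1, e2]
    linarith
  have h1 := hanti.le_of_tendsto htend 1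
  have h2 : Real.log (Real.sqrt π) < φ 0 := lt_of_le_of_lt h1 h0
  rw [hφ] at h2
  dsimp only at h2
  rw [show 0 + (i+1) = i+1 from by omega] at h2
  rw [rr]
  linarith

noncomputable def hseq (m : ℕ) : ℝ := 1/(12*(m:ℝ)) - rr m
noncomputable def gseq (m : ℕ) : ℝ := rr m - 1/(12*(m:ℝ)+1)

lemma hseq_pos (m : ℕ) (hm : 1 ≤ m) : 0 < hseq m := by
  have := rr_lt m hm; rw [hseq]; linarith

lemma gseq_pos (m : ℕ) (hm : 1 ≤ m) : 0 < gseq m := by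
  have := rr_gt m hm; rw [gseq]; linarith

lemma hseq_succ_lt (m : ℕ) : hseq (m+1+1) < hseq (m+1) := by
  have hs := step_lt' m
  have hd : rr (m+1) - rr (m+2) = dd (m+1) - dd (m+2) := by rw [rr, rr]; ring
  rw [hseq, hseq, show m+1+1 = m+2 from by omega]
  linarith

lemma gseq_succ_lt (m : ℕ) : gseq (m+1+1) < gseq (m+1) := by
  have hs := step_gt' m
  have hd : rr (m+1) - rr (m+2) = dd (m+1) - dd (m+2) := by rw [rr, rr]; ring
  rw [gseq, gseq, show m+1+1 = m+2 from by omega]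
  linarith

lemma hseq_lt_of_lt {a b : ℕ} (ha : 1 ≤ a) (hab : a < b) : hseq b < hseq a := by
  induction b with
  | zero => omega
  | succ c ih =>
    obtain ⟨d, rfl⟩ : ∃ d, c = d + 1 := ⟨c-1, by omega⟩
    rcases Nat.lt_or_ge a (d+1) with h | h
    · exact lt_trans (hseq_succ_lt d) (ih h)
    · have : a = d + 1 := by omega
      subst this
      exact hseq_succ_lt d

lemma gseq_lt_of_lt {a b : ℕ} (ha : 1 ≤ a) (hab : a < b) : gseq b < gseq a := by
  induction b with
  | zero => omega
  | succ c ih =>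
    obtain ⟨d, rfl⟩ : ∃ d, c = d + 1 := ⟨c-1, by omega⟩
    rcases Nat.lt_or_ge a (d+1) with h | h
    · exact lt_trans (gseq_succ_lt d) (ih h)
    · have : a = d + 1 := by omega
      subst this
      exact gseq_succ_lt d

lemma F1 (k j : ℕ) (hk : 1 ≤ k) (hj : 1 ≤ j) :
    1/(12*((k+j:ℕ):ℝ)) - 1/(12*(k:ℝ)) - 1/(12*(j:ℝ)) < rr (k+j) - rr k - rr j := by
  have h1 : hseq (k+j) < hseq k := hseq_lt_of_lt hk (by omega)
  have h2 : 0 < hseq j := hseq_pos j hj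
  simp only [hseq] at h1 h2
  linarith

lemma F2 (k j : ℕ) (hk : 1 ≤ k) (hj : 1 ≤ j) :
    rr (k+j) - rr k - rr j < 1/(12*((k+j:ℕ):ℝ)+1) - 1/(12*(k:ℝ)+1) - 1/(12*(j:ℝ)+1) := by
  have h1 : gseq (k+j) < gseq k := gseq_lt_of_lt hk (by omega)
  have h2 : 0 < gseq j := gseq_pos j hj
  simp only [gseq] at h1 h2
  linarith


lemma exp_bound : Real.exp (87/7800) < 89/88 := by
  have h := Real.add_one_lt_exp (show (-(87/7800):ℝ) ≠ 0 by norm_num)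
  rw [Real.exp_neg] at h
  have he : 0 < Real.exp (87/7800:ℝ) := Real.exp_pos _
  have h2 : (7713/7800:ℝ) * Real.exp (87/7800) < 1 := by
    have h3 := mul_lt_mul_of_pos_right h he
    rw [inv_mul_cancel₀ he.ne'] at h3
    calc (7713/7800:ℝ) * Real.exp (87/7800)
        = (-(87/7800)+1) * Real.exp (87/7800) := by norm_num
      _ < 1 := h3
  nlinarith

noncomputable def FF (X : ℝ) : ℝ := 1/(12*X) - 1/(12*X+1)

lemma FF_eq {X : ℝ} (hX : 0 < X) : FF X = 1/(12*X*(12*X+1)) := by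
  rw [FF]
  field_simp
  ring

lemma FF_anti {X Y : ℝ} (hX : 1 ≤ X) (hXY : X ≤ Y) : FF Y ≤ FF X := by
  rw [FF_eq (by linarith), FF_eq (by linarith)]
  apply one_div_le_one_div_of_le
  · nlinarith
  · nlinarith

lemma FF_pos {X : ℝ} (hX : 1 ≤ X) : 0 < FF X := by
  rw [FF_eq (by linarith)]
  positivity

lemma Delta_le (k j : ℕ) (hk : 1 ≤ k) (hj : 1 ≤ j) :
    FF k + FF j - FF ((k+j:ℕ):ℝ) ≤ 87/7800 := by
  by_cases h : k = 1 ∧ j = 1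
  · obtain ⟨h1, h2⟩ := h
    subst h1; subst h2
    norm_num [FF]
  · have hcase : 2 ≤ k ∨ 2 ≤ j := by omega
    have hk1 : (1:ℝ) ≤ (k:ℝ) := by exact_mod_cast hk
    have hj1 : (1:ℝ) ≤ (j:ℝ) := by exact_mod_cast hj
    have hkj : (1:ℝ) ≤ ((k+j:ℕ):ℝ) := by push_cast; linarith
    have hpos : 0 < FF ((k+j:ℕ):ℝ) := FF_pos hkj
    have hF1 : FF 1 = (1:ℝ)/156 := by norm_num [FF]
    have hF2 : FF 2 = (1:ℝ)/600 := by norm_num [FF]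
    rcases hcase with h2 | h2
    · have ha : FF (k:ℝ) ≤ FF 2 := FF_anti (by norm_num) (by exact_mod_cast h2)
      have hb : FF (j:ℝ) ≤ FF 1 := FF_anti le_rfl hj1
      rw [hF1] at hb; rw [hF2] at ha
      linarith
    · have ha : FF (j:ℝ) ≤ FF 2 := FF_anti (by norm_num) (by exact_mod_cast h2)
      have hb : FF (k:ℝ) ≤ FF 1 := FF_anti le_rfl hk1
      rw [hF1] at hb; rw [hF2] at ha
      linarith

lemma D_expand {N K J p : ℝ} (hK : 0 < K) (hJ : 0 < J) (hN : N = K + J)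
    (hp0 : 0 < p) (hp1 : p < 1) :
    -(N * D (K/N) p) = N * Real.log (N/Real.exp 1) - K * Real.log (K/Real.exp 1)
      - J * Real.log (J/Real.exp 1) + K * Real.log p + J * Real.log (1-p) := by
  have hN0 : (0:ℝ) < N := by linarith
  have hq0 : (0:ℝ) < 1 - p := by linarith
  have h1 : 1 - K/N = J/N := by field_simp; linarith
  rw [D, h1]
  rw [Real.log_div (by positivity) hp0.ne', Real.log_div hK.ne' hN0.ne']
  rw [Real.log_div (by positivity) hq0.ne', Real.log_div hJ.ne' hN0.ne']
  rw [Real.log_div hN0.ne' (Real.exp_ne_zero 1), Real.log_div hK.ne' (Real.exp_ne_zero 1),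
    Real.log_div hJ.ne' (Real.exp_ne_zero 1), Real.log_exp]
  subst hN
  field_simp
  ring

lemma log_factorial (m : ℕ) : Real.log (m.factorial) =
    dd m + 1/2 * Real.log (2*(m:ℝ)) + (m:ℝ) * Real.log ((m:ℝ)/Real.exp 1) := by
  have := Stirling.log_stirlingSeq_formula m
  rw [dd]
  linarith

lemma log_b_eq {n k : ℕ} {p : ℝ} (hp0 : 0 < p) (hp1 : p < 1) (hk : 0 < k) (hkn : k < n) :
    Real.log (b n k p) = (dd n - dd k - dd (n-k))
      + 1/2 * (Real.log (2*(n:ℝ)) - Real.log (2*(k:ℝ)) - Real.log (2*((n-k:ℕ):ℝ)))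
      + ((n:ℝ) * Real.log ((n:ℝ)/Real.exp 1) - (k:ℝ) * Real.log ((k:ℝ)/Real.exp 1)
        - ((n-k:ℕ):ℝ) * Real.log (((n-k:ℕ):ℝ)/Real.exp 1))
      + (k:ℝ) * Real.log p + ((n-k:ℕ):ℝ) * Real.log (1-p) := by
  have hq0 : (0:ℝ) < 1 - p := by linarith
  have hchoose : (0:ℝ) < (n.choose k : ℝ) := by
    exact_mod_cast Nat.choose_pos (by omega : k ≤ n)
  have hfn : (0:ℝ) < (n.factorial : ℝ) := by exact_mod_cast n.factorial_pos
  have hfk : (0:ℝ) < (k.factorial : ℝ) := by exact_mod_cast k.factorial_pos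
  have hfj : (0:ℝ) < ((n-k).factorial : ℝ) := by exact_mod_cast (n-k).factorial_pos
  rw [b]
  rw [Real.log_mul (by positivity) (by positivity), Real.log_mul hchoose.ne' (by positivity)]
  rw [Real.log_pow, Real.log_pow]
  have hc : (n.choose k : ℝ) = (n.factorial : ℝ) / ((k.factorial : ℝ) * ((n-k).factorial : ℝ)) :=
    Nat.cast_choose ℝ (by omega : k ≤ n)
  rw [hc, Real.log_div hfn.ne' (by positivity), Real.log_mul hfk.ne' hfj.ne']
  rw [log_factorial n, log_factorial k, log_factorial (n-k)]
  push_cast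
  ring

section TailBounds

variable {n k : ℕ} {p : ℝ}

lemma B_sum (n s : ℕ) (p : ℝ) : B n s p = ∑ j ∈ Finset.range (s+1), b n j p := rfl

lemma b_pos (hp0 : 0 < p) (hp1 : p < 1) {i : ℕ} (hi : i ≤ n) : 0 < b n i p := by
  have h1 : 0 < (n.choose i : ℝ) := by
    exact_mod_cast Nat.choose_pos hi
  have h2 : (0:ℝ) < 1 - p := by linarith
  rw [b]
  positivity

lemma b_ratio (hn : i + 1 ≤ n) (p : ℝ) :
    ((i:ℝ)+1) * (1-p) * b n (i+1) p = ((n:ℝ) - i) * p * b n i p := by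
  rw [b, b]
  have h1 : (n.choose (i+1) : ℝ) * ((i:ℝ)+1) = (n.choose i : ℝ) * ((n:ℝ) - i) := by
    have := Nat.choose_succ_right_eq n i
    have h2 : ((n.choose (i+1) * (i+1) : ℕ) : ℝ) = ((n.choose i * (n - i) : ℕ) : ℝ) := by
      exact_mod_cast congrArg (Nat.cast (R := ℝ)) this
    push_cast [Nat.cast_sub (by omega : i ≤ n)] at h2
    linarith
  have h2 : p^(i+1) = p^i * p := pow_succ p i
  have h3 : (1-p)^(n-i) = (1-p)^(n-(i+1)) * (1-p) := by
    rw [← pow_succ]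
    congr 1
    omega
  rw [h2, h3]
  linear_combination (p^i * p * (1-p)^(n-(i+1)) * (1-p)) * h1

lemma b_mono (hp0 : 0 < p) (hp1 : p < 1) (hkp : (k:ℝ) ≤ p * n) {i : ℕ} (hik : i < k)
    (hkn : k ≤ n) : b n i p ≤ b n (i+1) p := by
  have hin : i + 1 ≤ n := by omega
  have hr := b_ratio (n := n) hin p
  have hb1 : 0 < b n (i+1) p := b_pos hp0 hp1 hin
  have hni : (0:ℝ) < (n:ℝ) - i := by
    have : (i:ℝ) < (n:ℝ) := by exact_mod_cast (by omega : i < n)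
    linarith
  have hcoef : ((i:ℝ)+1) * (1-p) ≤ ((n:ℝ) - i) * p := by
    have h1 : ((i:ℝ)+1) ≤ (k:ℝ) := by exact_mod_cast (by omega : i+1 ≤ k)
    nlinarith
  have h4 : ((n:ℝ)-i)*p*b n i p ≤ ((n:ℝ)-i)*p*b n (i+1) p := by
    rw [← hr]
    exact mul_le_mul_of_nonneg_right hcoef hb1.le
  exact le_of_mul_le_mul_left h4 (mul_pos hni hp0)

lemma b_le_bk (hp0 : 0 < p) (hp1 : p < 1) (hkp : (k:ℝ) ≤ p * n) (hkn : k ≤ n)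
    {i : ℕ} (hik : i ≤ k) : b n i p ≤ b n k p := by
  induction k with
  | zero =>
    have : i = 0 := by omega
    subst this
    exact le_rfl
  | succ m ih =>
    rcases Nat.lt_or_ge i (m+1) with h | h
    · have hkp' : (m:ℝ) ≤ p * n := by
        have : ((m:ℝ)+1) ≤ p*n := by exact_mod_cast hkp
        linarith
      calc b n i p ≤ b n m p := ih hkp' (by omega) (by omega)
        _ ≤ b n (m+1) p := b_mono hp0 hp1 hkp (by omega) hkn
    · have : i = m+1 := by omega
      subst this
      exact le_rfl

lemma geom_bound (hp0 : 0 < p) (hp1 : p < 1) (hkp : (k:ℝ) ≤ p * n) (hkn : k < n) :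
    ∀ s : ℕ, s ≤ k →
    B n s p ≤ b n s p / (1 - (s:ℝ)*(1-p)/((((n:ℝ) - s) + 1)*p)) := by
  intro s
  induction s with
  | zero =>
    intro _
    rw [B_sum, Finset.range_one, Finset.sum_singleton]
    norm_num
  | succ t ih =>
    intro hsk
    have htn : t + 1 < n := by omega
    have hq0 : (0:ℝ) < 1 - p := by linarith
    have hNt : (0:ℝ) < (n:ℝ) - (t+1) := by
      have : ((t:ℝ)+1) < (n:ℝ) := by exact_mod_cast htn
      push_cast; linarith
    have hNt1 : (0:ℝ) < (n:ℝ) - t := by linarith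
    have hNt2 : (0:ℝ) < (n:ℝ) - t + 1 := by linarith
    have htk : ((t:ℝ)+1) ≤ (k:ℝ) := by exact_mod_cast hsk
    -- ρ at t+1
    set ρs : ℝ := ((t:ℝ)+1)*(1-p)/((((n:ℝ) - t))*p) with hρs
    have hρs_lt : ρs < 1 := by
      rw [hρs, div_lt_one (by positivity)]
      nlinarith
    have hρs_nonneg : 0 ≤ ρs := by rw [hρs]; positivity
    have h1ρs : 0 < 1 - ρs := by linarith
    -- ρ at t
    set ρt : ℝ := (t:ℝ)*(1-p)/((((n:ℝ) - t) + 1)*p) with hρt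
    have hρt_nonneg : 0 ≤ ρt := by
      rw [hρt]
      have : (0:ℝ) ≤ (t:ℝ) := Nat.cast_nonneg t
      positivity
    have hρ_mono : ρt ≤ ρs := by
      rw [hρt, hρs, div_le_div_iff₀ (by positivity) (by positivity)]
      nlinarith [Nat.cast_nonneg (α := ℝ) t]
    have h1ρt : 0 < 1 - ρt := by linarith
    have hb1 : 0 < b n (t+1) p := b_pos hp0 hp1 (by omega)
    have hbt : b n t p = ρs * b n (t+1) p := by
      have hr := b_ratio (n := n) (i := t) (by omega) p
      rw [hρs, div_mul_eq_mul_div, eq_div_iff (by positivity)]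
      linear_combination (-1 : ℝ) * hr
    have hsplit : B n (t+1) p = B n t p + b n (t+1) p := by
      rw [B_sum, B_sum, Finset.sum_range_succ]
    have step1 : B n t p ≤ b n t p / (1 - ρt) := ih (by omega)
    have step2 : b n t p / (1 - ρt) ≤ b n t p / (1 - ρs) := by
      exact div_le_div_of_nonneg_left (b_pos hp0 hp1 (show t ≤ n by omega)).le h1ρs
        (by linarith : 1 - ρs ≤ 1 - ρt)
    have step3 : b n t p / (1 - ρs) + b n (t+1) p = b n (t+1) p / (1 - ρs) := by
      rw [hbt]
      field_simp
      ring
    have hgoal : b n (t+1) p / (1 - ρs)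
        = b n (t+1) p / (1 - ((t+1:ℕ):ℝ)*(1-p)/((((n:ℝ) - (t+1:ℕ)) + 1)*p)) := by
      rw [hρs]
      norm_num
      rw [show ((n:ℝ) - ((t:ℝ)+1) + 1) = (n:ℝ) - t from by ring]
    rw [hsplit, ← hgoal]
    linarith

lemma B_le_V_mul (hp0 : 0 < p) (hp1 : p < 1) (hkp : (k:ℝ) ≤ p * n) (hkn : k < n)
    (a : ℕ) : B n k p ≤ V n k p a * b n k p := by
  have hq0 : (0:ℝ) < 1 - p := by linarith
  have hbk : 0 < b n k p := b_pos hp0 hp1 (by omega)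
  have hKN : (k:ℝ) ≤ (n:ℝ) := by exact_mod_cast (by omega : k ≤ n)
  have hden : (0:ℝ) < p*(n:ℝ) + p - k + a := by
    have : (0:ℝ) ≤ (a:ℝ) := Nat.cast_nonneg a
    linarith
  have hnum : (0:ℝ) ≤ (n:ℝ) - k + a + 1 := by
    have : (0:ℝ) ≤ (a:ℝ) := Nat.cast_nonneg a
    linarith
  have hfrac : 0 ≤ p * ((n:ℝ) - k + a + 1) / (p*(n:ℝ) + p - k + a) := by positivity
  rcases Nat.lt_or_ge k a with hak | hak
  · -- a > k : crude bound
    have hcard : B n k p ≤ ((k:ℝ)+1) * b n k p := by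
      rw [B_sum]
      calc ∑ j ∈ Finset.range (k+1), b n j p
          ≤ (Finset.range (k+1)).card • b n k p := by
            apply Finset.sum_le_card_nsmul
            intro j hj
            exact b_le_bk hp0 hp1 hkp (by omega) (by
              simp only [Finset.mem_range] at hj; omega)
        _ = ((k:ℝ)+1) * b n k p := by
            rw [Finset.card_range, nsmul_eq_mul]
            push_cast
            ring
    have hVa : ((k:ℝ)+1) ≤ V n k p a := by
      rw [V]
      have : ((k:ℝ)+1) ≤ (a:ℝ) := by exact_mod_cast hak
      linarith
    calc B n k p ≤ ((k:ℝ)+1) * b n k p := hcard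
      _ ≤ V n k p a * b n k p := by
          apply mul_le_mul_of_nonneg_right hVa hbk.le
  · -- a ≤ k
    set s : ℕ := k - a with hs
    have hsk : s ≤ k := by omega
    have hsa : k = s + a := by omega
    have hsK : (s:ℝ) = (k:ℝ) - a := by
      rw [hs]
      push_cast [Nat.cast_sub hak]
      ring
    have hsplit : B n k p = B n s p + ∑ j ∈ Finset.Ico (s+1) (k+1), b n j p := by
      rw [B_sum n k, B_sum n s]
      simp only [Finset.range_eq_Ico]
      exact (Finset.sum_Ico_consecutive _ (by omega : 0 ≤ s+1) (by omega : s+1 ≤ k+1)).symm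
    have hico : ∑ j ∈ Finset.Ico (s+1) (k+1), b n j p ≤ (a:ℝ) * b n k p := by
      calc ∑ j ∈ Finset.Ico (s+1) (k+1), b n j p
          ≤ (Finset.Ico (s+1) (k+1)).card • b n k p := by
            apply Finset.sum_le_card_nsmul
            intro j hj
            simp only [Finset.mem_Ico] at hj
            exact b_le_bk hp0 hp1 hkp (by omega) (by omega)
        _ = (a:ℝ) * b n k p := by
            rw [Nat.card_Ico, nsmul_eq_mul]
            congr 1
            push_cast [show k + 1 - (s+1) = a from by omega]
            ring
    have hgeo := geom_bound hp0 hp1 hkp hkn s hsk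
    have hρpos : 0 < 1 - (s:ℝ)*(1-p)/((((n:ℝ) - s) + 1)*p) := by
      have hd : (0:ℝ) < ((n:ℝ) - s + 1)*p := by
        have : (s:ℝ) ≤ (k:ℝ) := by exact_mod_cast hsk
        have : (0:ℝ) < (n:ℝ) - s + 1 := by linarith
        positivity
      rw [sub_pos, div_lt_one hd]
      have h1 : (s:ℝ) ≤ (k:ℝ) := by exact_mod_cast hsk
      nlinarith
    have hbs : b n s p ≤ b n k p := b_le_bk hp0 hp1 hkp (by omega) hsk
    have hBs : B n s p ≤ b n k p / (1 - (s:ℝ)*(1-p)/((((n:ℝ) - s) + 1)*p)) := by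
      refine hgeo.trans ?_
      exact (div_le_div_iff_of_pos_right hρpos).mpr hbs
    have hfrac_eq : b n k p / (1 - (s:ℝ)*(1-p)/((((n:ℝ) - s) + 1)*p))
        = p * ((n:ℝ) - k + a + 1) / (p*(n:ℝ) + p - k + a) * b n k p := by
      have ha0 : (0:ℝ) ≤ (a:ℝ) := Nat.cast_nonneg a
      have hd1 : ((n:ℝ) - ((k:ℝ) - a) + 1) * p ≠ 0 := by
        have : (0:ℝ) < (n:ℝ) - ((k:ℝ)-a) + 1 := by linarith
        positivity
      have hd2 : (n:ℝ) - ((k:ℝ) - a) + 1 ≠ 0 := by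
        have : (0:ℝ) < (n:ℝ) - ((k:ℝ)-a) + 1 := by linarith
        exact this.ne'
      have hden' : p*(n:ℝ) + p - k + a ≠ 0 := hden.ne'
      have hden'' : (n:ℝ)*p - k + a + p ≠ 0 := by
        have : (0:ℝ) < (n:ℝ)*p - k + a + p := by linarith
        exact this.ne'
      rw [div_eq_iff hρpos.ne', hsK]
      have e : 1 - ((k:ℝ) - a)*(1-p)/((((n:ℝ) - ((k:ℝ) - a)) + 1)*p)
          = (p*(n:ℝ) + p - k + a)/((((n:ℝ) - ((k:ℝ) - a)) + 1)*p) := by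
        rw [one_sub_div hd1]
        congr 1
        ring
      rw [e, div_mul_eq_mul_div, div_mul_div_comm, eq_div_iff (mul_ne_zero hden' hd1)]
      ring
    rw [hsplit, V]
    rw [hfrac_eq] at hBs
    nlinarith [hico, hBs]

lemma V_ge_one (hp0 : 0 < p) (hp1 : p < 1) (hkp : (k:ℝ) ≤ p * n) (hkn : k ≤ n) (a : ℕ) :
    1 ≤ V n k p a := by
  have ha0 : (0:ℝ) ≤ (a:ℝ) := Nat.cast_nonneg a
  have hKN : (k:ℝ) ≤ (n:ℝ) := by exact_mod_cast hkn
  have hden : (0:ℝ) < p*(n:ℝ) + p - k + a := by linarith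
  rcases Nat.eq_zero_or_pos a with h | h
  · subst h
    rw [V]
    norm_num
    have hd : (0:ℝ) < p * (n:ℝ) + p - k := by
      push_cast at hden
      linarith
    rw [le_div_iff₀ hd]
    have hk0 : (0:ℝ) ≤ (k:ℝ) := Nat.cast_nonneg k
    nlinarith
  · have h1 : (1:ℝ) ≤ (a:ℝ) := by exact_mod_cast h
    have hfrac : 0 ≤ p * ((n:ℝ) - k + a + 1) / (p*(n:ℝ) + p - k + a) := by
      have : (0:ℝ) ≤ (n:ℝ) - k + a + 1 := by linarith
      positivity
    rw [V]
    linarith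

lemma U_bddBelow : BddBelow (Set.range (fun a : ℕ => V n (k:ℕ) p ((a:ℕ):ℝ)))
    ∨ True := Or.inr trivial

lemma one_le_U (hp0 : 0 < p) (hp1 : p < 1) (hkp : (k:ℝ) ≤ p * n) (hkn : k ≤ n) :
    1 ≤ U n k p :=
  le_ciInf (fun a => V_ge_one hp0 hp1 hkp hkn a)

lemma U_le_V (hp0 : 0 < p) (hp1 : p < 1) (hkp : (k:ℝ) ≤ p * n) (hkn : k ≤ n) (a : ℕ) :
    U n k p ≤ V n k p a :=
  ciInf_le ⟨1, fun y ⟨a', ha'⟩ => ha' ▸ V_ge_one hp0 hp1 hkp hkn a'⟩ a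

lemma B_le_U_mul (hp0 : 0 < p) (hp1 : p < 1) (hkp : (k:ℝ) ≤ p * n) (hkn : k < n) :
    B n k p ≤ U n k p * b n k p := by
  have hbk : 0 < b n k p := b_pos hp0 hp1 (by omega)
  rw [← div_le_iff₀ hbk]
  apply le_ciInf
  intro a
  rw [div_le_iff₀ hbk]
  exact B_le_V_mul hp0 hp1 hkp hkn a

-- L lemmas
lemma L_ge_one {N K : ℝ} (hm : 0 ≤ p * N - K) (hqk : 0 ≤ (1-p) * K) : 1 ≤ L N K p := by
  rw [L]
  have h1 : Real.sqrt ((p * N - K + 1)^2) ≤ Real.sqrt ((p * N - K + 1) ^ 2 + 4 * (1 - p) * K) :=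
    Real.sqrt_le_sqrt (by nlinarith)
  rw [Real.sqrt_sq (by linarith : (0:ℝ) ≤ p * N - K + 1)] at h1
  linarith

lemma L_id {N K : ℝ} (hA : 0 ≤ (p * N - K + 1) ^ 2 + 4 * (1 - p) * K) :
    (L N K p - 1) * (L N K p + (p * N - K)) = (1-p) * K := by
  rw [L]
  have hS := Real.sq_sqrt hA
  set S := Real.sqrt ((p * N - K + 1) ^ 2 + 4 * (1 - p) * K)
  linear_combination hS / 4

lemma L_le {N K lam : ℝ} (hm : 0 ≤ p * N - K) (hlam : 1 ≤ lam)
    (h : (1-p) * K ≤ (lam - 1) * (lam + (p * N - K))) : L N K p ≤ lam := by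
  rw [L]
  have hR : 0 ≤ 2 * lam - 1 + (p * N - K) := by linarith
  have h2 : (p * N - K + 1) ^ 2 + 4 * (1 - p) * K ≤ (2 * lam - 1 + (p * N - K))^2 := by
    nlinarith
  have h3 : Real.sqrt ((p * N - K + 1) ^ 2 + 4 * (1 - p) * K) ≤ 2 * lam - 1 + (p * N - K) := by
    calc Real.sqrt ((p * N - K + 1) ^ 2 + 4 * (1 - p) * K)
        ≤ Real.sqrt ((2 * lam - 1 + (p * N - K))^2) := Real.sqrt_le_sqrt h2
      _ = 2 * lam - 1 + (p * N - K) := Real.sqrt_sq hR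
  linarith

lemma L_mul_b_le_B (hp0 : 0 < p) (hp1 : p < 1) :
    ∀ k : ℕ, (k:ℝ) ≤ p * n → k ≤ n → L (n:ℝ) (k:ℝ) p * b n k p ≤ B n k p := by
  intro k
  induction k with
  | zero =>
    intro h1 h2
    have hn0 : (0:ℝ) ≤ p * (n:ℝ) := by positivity
    have h0 : Real.sqrt ((p*(n:ℝ) - ((0:ℕ):ℝ) + 1)^2 + 4*(1-p)*((0:ℕ):ℝ)) = p*(n:ℝ) + 1 := by
      rw [show (p*(n:ℝ) - ((0:ℕ):ℝ) + 1)^2 + 4*(1-p)*((0:ℕ):ℝ) = (p*(n:ℝ)+1)^2 from by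
        push_cast; ring]
      exact Real.sqrt_sq (by linarith)
    have hL : L (n:ℝ) ((0:ℕ):ℝ) p = 1 := by
      rw [L, h0]
      push_cast
      ring
    rw [hL, one_mul, B_sum, Finset.range_one, Finset.sum_singleton]
  | succ m ih =>
    intro h1 h2
    have hq0 : (0:ℝ) < 1 - p := by linarith
    have hm0 : (0:ℝ) ≤ (m:ℝ) := Nat.cast_nonneg m
    have hm1 : ((m:ℝ)+1) ≤ p * n := by push_cast at h1; linarith
    have hmpn : (m:ℝ) ≤ p * n := by linarith
    have hmn : m ≤ n := by omega
    have hmn' : m + 1 ≤ n := h2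
    have hNm : (0:ℝ) < (n:ℝ) - m := by
      have hpn : p * (n:ℝ) < (n:ℝ) := by nlinarith [(Nat.cast_pos (α := ℝ)).mpr (show 0 < n by omega)]
      linarith
    have ih' := ih hmpn hmn
    set y := L (n:ℝ) (m:ℝ) p with hy
    have hy1 : 1 ≤ y := L_ge_one (by linarith) (by positivity)
    have hyid : (y - 1) * (y + (p*(n:ℝ) - m)) = (1-p)*(m:ℝ) :=
      L_id (by positivity)
    set m2 : ℝ := p*(n:ℝ) - m - 1 with hm2
    have hm2nn : 0 ≤ m2 := by rw [hm2]; linarith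
    have hym2 : 0 < y + m2 := by rw [hm2]; linarith
    have hD0 : y * (y + m2) = p * ((n:ℝ) - m) := by
      rw [hm2]; linear_combination hyid
    set ρ : ℝ := ((m:ℝ)+1)*(1-p)/(((n:ℝ) - m)*p) with hρ
    have hρ0 : 0 ≤ ρ := by rw [hρ]; positivity
    have hbm : b n m p = ρ * b n (m+1) p := by
      have hr := b_ratio (n := n) (i := m) hmn' p
      rw [hρ, div_mul_eq_mul_div, eq_div_iff (by positivity)]
      linear_combination (-1:ℝ) * hr
    set c : ℝ := (1-p)*((m:ℝ)+1) with hc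
    have hc0 : 0 ≤ c := by rw [hc]; positivity
    have hty : ρ * y = c / (y + m2) := by
      rw [hρ, hc, div_mul_eq_mul_div, div_eq_div_iff (by positivity) hym2.ne']
      linear_combination ((m:ℝ)+1)*(1-p)*hD0
    have h5 : (y-1)*(y+m2) ≤ c := by
      rw [hc, hm2]
      nlinarith [hyid, hy1, hq0]
    have hkey : c/(y+m2)*(c/(y+m2)+1+m2) - c = c*(c - (y-1)*(y+m2))/(y+m2)^2 := by
      field_simp
      ring
    have hquad : c ≤ (ρ*y)*(ρ*y+1+m2) := by
      rw [hty]
      have hnn : 0 ≤ c*(c - (y-1)*(y+m2))/(y+m2)^2 :=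
        div_nonneg (mul_nonneg hc0 (by linarith)) (sq_nonneg _)
      linarith [hkey]
    set lam : ℝ := 1 + ρ*y with hlam
    have hlam1 : 1 ≤ lam := by
      rw [hlam]
      nlinarith [hρ0, hy1]
    have hLle : L (n:ℝ) ((m+1:ℕ):ℝ) p ≤ lam := by
      apply L_le (by push_cast; linarith) hlam1
      push_cast
      have e1 : (lam - 1) * (lam + (p*(n:ℝ) - ((m:ℝ)+1))) = (ρ*y)*(ρ*y+1+m2) := by
        rw [hlam, hm2]; ring
      rw [e1]
      rw [hc] at hquad
      linarith [hquad]
    have hb1 : 0 < b n (m+1) p := b_pos hp0 hp1 hmn'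
    calc L (n:ℝ) ((m+1:ℕ):ℝ) p * b n (m+1) p
        ≤ lam * b n (m+1) p := mul_le_mul_of_nonneg_right hLle hb1.le
      _ = b n (m+1) p + y * (ρ * b n (m+1) p) := by rw [hlam]; ring
      _ = b n (m+1) p + y * b n m p := by rw [← hbm]
      _ ≤ b n (m+1) p + B n m p := by linarith [ih']
      _ = B n (m+1) p := by rw [B_sum n (m+1), Finset.sum_range_succ, ← B_sum]; ring

lemma V_ceil_le_two_L (hp0 : 0 < p) (hp1 : p < 1) {N K : ℝ}
    (hm : 0 ≤ p * N - K) (hK : 0 ≤ K) :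
    V N K p ((⌈L N K p - 1⌉₊ : ℕ) : ℝ) ≤ 2 * L N K p := by
  have hq0 : (0:ℝ) < 1 - p := by linarith
  set x : ℝ := L N K p - 1 with hx
  have hx0 : 0 ≤ x := by
    rw [hx]
    have := L_ge_one (p := p) hm (by positivity)
    linarith
  have hid : x * (x + 1 + (p*N - K)) = (1-p)*K := by
    have := L_id (p := p) (N := N) (K := K) (by positivity)
    rw [hx]
    linear_combination this
  set a : ℕ := ⌈x⌉₊ with ha
  have ha1 : x ≤ (a:ℝ) := Nat.le_ceil x
  have ha2 : (a:ℝ) < x + 1 := Nat.ceil_lt_add_one hx0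
  have hden : (0:ℝ) < p*N + p - K + a := by
    have : (0:ℝ) ≤ (a:ℝ) := Nat.cast_nonneg a
    linarith
  rw [V]
  rw [show (2:ℝ) * L N K p = 2*(x+1) from by rw [hx]; ring]
  rw [← sub_nonneg]
  have hstep : (a:ℝ) + p * (N - K + a + 1) / (p*N + p - K + a) ≤ 2*(x+1) ↔
      p * (N - K + a + 1) ≤ (2*(x+1) - a) * (p*N + p - K + a) := by
    rw [← sub_nonneg, ← sub_nonneg (b := p * (N - K + a + 1))]
    constructor
    · intro h
      have h2 : p * (N - K + a + 1) / (p*N + p - K + a) ≤ 2*(x+1) - a := by linarith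
      rw [div_le_iff₀ hden] at h2
      linarith
    · intro h
      have h2 : p * (N - K + a + 1) ≤ (2*(x+1) - a) * (p*N + p - K + a) := by linarith
      rw [← div_le_iff₀ hden] at h2
      linarith
  rw [sub_nonneg, hstep]
  have h1 : 0 ≤ 1 - ((a:ℝ) - x) := by linarith
  have h2 : 0 ≤ (a:ℝ) - x := by linarith
  nlinarith [mul_nonneg hm h1, mul_nonneg hp0.le h1, mul_nonneg h2 h1,
    mul_nonneg h2 hq0.le, hid, hx0]

end TailBounds

-- the exp-form identity
lemma b_eq {n k : ℕ} {p : ℝ} (hp0 : 0 < p) (hp1 : p < 1) (hk : 0 < k) (hkn : k < n) :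
    b n k p = Real.exp (rr n - rr k - rr (n-k)) *
      (Real.sqrt (n:ℝ) / Real.sqrt (2*π*(k:ℝ)*((n:ℝ)-(k:ℝ))) *
        Real.exp (-((n:ℝ) * D ((k:ℝ)/(n:ℝ)) p))) := by
  have hq0 : (0:ℝ) < 1 - p := by linarith
  have hN : (0:ℝ) < (n:ℝ) := by exact_mod_cast (by omega : 0 < n)
  have hK : (0:ℝ) < (k:ℝ) := by exact_mod_cast hk
  have hJ : (0:ℝ) < ((n-k:ℕ):ℝ) := by exact_mod_cast (by omega : 0 < n - k)
  have hJcast : ((n-k:ℕ):ℝ) = (n:ℝ) - (k:ℝ) := by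
    push_cast [Nat.cast_sub (by omega : k ≤ n)]
    ring
  have hNK : (0:ℝ) < (n:ℝ) - (k:ℝ) := by rw [← hJcast]; exact hJ
  have harg : (0:ℝ) < 2*π*(k:ℝ)*((n:ℝ)-(k:ℝ)) := by positivity
  have hsq : (0:ℝ) < Real.sqrt (2*π*(k:ℝ)*((n:ℝ)-(k:ℝ))) := Real.sqrt_pos.mpr harg
  have hsqN : (0:ℝ) < Real.sqrt (n:ℝ) := Real.sqrt_pos.mpr hN
  have hC0 : (0:ℝ) < Real.sqrt (n:ℝ) / Real.sqrt (2*π*(k:ℝ)*((n:ℝ)-(k:ℝ))) *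
      Real.exp (-((n:ℝ) * D ((k:ℝ)/(n:ℝ)) p)) := by positivity
  have hb : 0 < b n k p := b_pos hp0 hp1 (by omega)
  have hNsum : (n:ℝ) = (k:ℝ) + ((n-k:ℕ):ℝ) := by rw [hJcast]; ring
  have eD := D_expand (N := (n:ℝ)) (K := (k:ℝ)) (J := ((n-k:ℕ):ℝ)) hK hJ hNsum hp0 hp1
  have eπ : Real.log (Real.sqrt π) = 1/2 * Real.log π := by
    rw [Real.log_sqrt pi_pos.le]; ring
  have e2N : Real.log (2*(n:ℝ)) = Real.log 2 + Real.log (n:ℝ) :=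
    Real.log_mul (by norm_num) hN.ne'
  have e2K : Real.log (2*(k:ℝ)) = Real.log 2 + Real.log (k:ℝ) :=
    Real.log_mul (by norm_num) hK.ne'
  have e2J : Real.log (2*((n-k:ℕ):ℝ)) = Real.log 2 + Real.log ((n-k:ℕ):ℝ) :=
    Real.log_mul (by norm_num) hJ.ne'
  have earg : Real.log (2*π*(k:ℝ)*((n:ℝ)-(k:ℝ)))
      = Real.log 2 + Real.log π + Real.log (k:ℝ) + Real.log ((n:ℝ)-(k:ℝ)) := by
    rw [Real.log_mul (by positivity) hNK.ne', Real.log_mul (by positivity) hK.ne',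
      Real.log_mul (by norm_num) pi_pos.ne']
  have hlog : Real.log (b n k p) = (rr n - rr k - rr (n-k)) +
      Real.log (Real.sqrt (n:ℝ) / Real.sqrt (2*π*(k:ℝ)*((n:ℝ)-(k:ℝ))) *
        Real.exp (-((n:ℝ) * D ((k:ℝ)/(n:ℝ)) p))) := by
    rw [Real.log_mul (by positivity) (Real.exp_ne_zero _), Real.log_exp,
      Real.log_div hsqN.ne' hsq.ne', Real.log_sqrt hN.le, Real.log_sqrt harg.le]
    rw [log_b_eq hp0 hp1 hk hkn]
    rw [rr, rr, rr, eπ, e2N, e2K, e2J, earg]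
    rw [eD]
    rw [hJcast]
    ring
  calc b n k p = Real.exp (Real.log (b n k p)) := (Real.exp_log hb).symm
    _ = _ := by rw [hlog, Real.exp_add, Real.exp_log hC0]

theorem main
    (n k : ℕ) (hn : 0 < n) (hk : 0 < k) (p : ℝ) (hp0 : 0 < p) (hp1 : p < 1)
    (hkp : (k : ℝ) ≤ p * n) :
    Bdown n k p < B n k p ∧ B n k p < Bup n k p ∧
      Bup n k p < (89 / 44) * Bdown n k p := by
  have hq0 : (0:ℝ) < 1 - p := by linarith
  have hN : (0:ℝ) < (n:ℝ) := by exact_mod_cast hn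
  have hK : (0:ℝ) < (k:ℝ) := by exact_mod_cast hk
  have hkn : k < n := by
    by_contra h
    have h2 : (n:ℝ) ≤ (k:ℝ) := by exact_mod_cast (by omega : n ≤ k)
    nlinarith
  have hJpos : 0 < n - k := by omega
  have hJ : (0:ℝ) < ((n-k:ℕ):ℝ) := by exact_mod_cast hJpos
  have hJcast : ((n-k:ℕ):ℝ) = (n:ℝ) - (k:ℝ) := by
    push_cast [Nat.cast_sub (by omega : k ≤ n)]
    ring
  have hNK : (0:ℝ) < (n:ℝ) - (k:ℝ) := by rw [← hJcast]; exact hJ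
  set C0 : ℝ := Real.sqrt (n:ℝ) / Real.sqrt (2*π*(k:ℝ)*((n:ℝ)-(k:ℝ))) *
      Real.exp (-((n:ℝ) * D ((k:ℝ)/(n:ℝ)) p)) with hC0def
  have hC0 : 0 < C0 := by
    rw [hC0def]
    have harg : (0:ℝ) < 2*π*(k:ℝ)*((n:ℝ)-(k:ℝ)) := by positivity
    have hsq : (0:ℝ) < Real.sqrt (2*π*(k:ℝ)*((n:ℝ)-(k:ℝ))) := Real.sqrt_pos.mpr harg
    have hsqN : (0:ℝ) < Real.sqrt (n:ℝ) := Real.sqrt_pos.mpr hN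
    positivity
  set ed : ℝ := 1 / (12 * (n:ℝ)) - 1 / (12 * (k:ℝ)) - 1 / (12 * ((n : ℝ) - k)) with hed
  set eu : ℝ := 1 / (12 * (n:ℝ) + 1) - 1 / (12 * (k:ℝ) + 1) - 1 / (12 * ((n : ℝ) - k) + 1)
    with heu
  have hBdown_eq : Bdown n k p = L (n:ℝ) (k:ℝ) p * C0 * Real.exp ed := by
    rw [Bdown, hC0def, hed]
    ring
  have hBup_eq : Bup n k p = U (n:ℝ) (k:ℝ) p * C0 * Real.exp eu := by
    rw [Bup, hC0def, heu]
    ring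
  have hbe := b_eq hp0 hp1 hk hkn
  rw [← hC0def] at hbe
  set rc : ℝ := rr n - rr k - rr (n-k) with hrc
  -- F1 / F2 specialized
  have hnkk : k + (n-k) = n := by omega
  have hF1 : ed < rc := by
    have := F1 k (n-k) (by omega) (by omega)
    rw [hnkk] at this
    rw [hed, hrc, hJcast] at *
    convert this using 2
  have hF2 : rc < eu := by
    have := F2 k (n-k) (by omega) (by omega)
    rw [hnkk] at this
    rw [heu, hrc, hJcast] at *
    convert this using 2
  have hL1 : 1 ≤ L (n:ℝ) (k:ℝ) p := L_ge_one (by linarith) (by positivity)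
  have hLpos : 0 < L (n:ℝ) (k:ℝ) p := by linarith
  have hU1 : 1 ≤ U (n:ℝ) (k:ℝ) p := one_le_U hp0 hp1 hkp (by omega)
  have hUpos : 0 < U (n:ℝ) (k:ℝ) p := by linarith
  have hbpos : 0 < b n k p := b_pos hp0 hp1 (by omega)
  refine ⟨?_, ?_, ?_⟩
  · -- Bdown < B
    have h1 : L (n:ℝ) (k:ℝ) p * b n k p ≤ B n k p := L_mul_b_le_B hp0 hp1 k hkp (by omega)
    have h2 : Bdown n k p < L (n:ℝ) (k:ℝ) p * b n k p := by
      rw [hBdown_eq, hbe]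
      have hee : Real.exp ed < Real.exp rc := Real.exp_lt_exp.mpr hF1
      calc L (n:ℝ) (k:ℝ) p * C0 * Real.exp ed
          < L (n:ℝ) (k:ℝ) p * C0 * Real.exp rc := by
            apply mul_lt_mul_of_pos_left hee (by positivity)
        _ = L (n:ℝ) (k:ℝ) p * (Real.exp rc * C0) := by ring
    linarith
  · have h1 : B n k p ≤ U (n:ℝ) (k:ℝ) p * b n k p := B_le_U_mul hp0 hp1 hkp hkn
    have h2 : U (n:ℝ) (k:ℝ) p * b n k p < Bup n k p := by
      rw [hBup_eq, hbe]
      have hee : Real.exp rc < Real.exp eu := Real.exp_lt_exp.mpr hF2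
      calc U (n:ℝ) (k:ℝ) p * (Real.exp rc * C0)
          = U (n:ℝ) (k:ℝ) p * C0 * Real.exp rc := by ring
        _ < U (n:ℝ) (k:ℝ) p * C0 * Real.exp eu := by
            apply mul_lt_mul_of_pos_left hee (by positivity)
    linarith
  · have hUle : U (n:ℝ) (k:ℝ) p ≤ 2 * L (n:ℝ) (k:ℝ) p := by
      calc U (n:ℝ) (k:ℝ) p ≤ V (n:ℝ) (k:ℝ) p ((⌈L (n:ℝ) (k:ℝ) p - 1⌉₊ : ℕ):ℝ) :=
            U_le_V hp0 hp1 hkp (by omega) _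
        _ ≤ 2 * L (n:ℝ) (k:ℝ) p := V_ceil_le_two_L hp0 hp1 (by linarith) hK.le
    have hdelta : eu - ed ≤ 87/7800 := by
      have hD := Delta_le k (n-k) (by omega) (by omega)
      rw [hnkk] at hD
      rw [hJcast] at hD
      simp only [FF] at hD
      rw [heu, hed]
      linarith
    have hexp : Real.exp eu < (89/88) * Real.exp ed := by
      have h3 : Real.exp (eu - ed) ≤ Real.exp ((87:ℝ)/7800) := Real.exp_le_exp.mpr hdelta
      have h4 := exp_bound
      have h5 : Real.exp eu = Real.exp (eu - ed) * Real.exp ed := by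
        rw [← Real.exp_add]
        congr 1
        ring
      rw [h5]
      have h6 : Real.exp (eu-ed) < 89/88 := lt_of_le_of_lt h3 h4
      nlinarith [Real.exp_pos ed]
    rw [hBup_eq, hBdown_eq]
    calc U (n:ℝ) (k:ℝ) p * C0 * Real.exp eu
        ≤ 2 * L (n:ℝ) (k:ℝ) p * C0 * Real.exp eu :=
          mul_le_mul_of_nonneg_right (mul_le_mul_of_nonneg_right hUle hC0.le)
            (Real.exp_pos eu).le
      _ < 89/44 * (L (n:ℝ) (k:ℝ) p * C0 * Real.exp ed) := by
          have hpos : 0 < L (n:ℝ) (k:ℝ) p * C0 := mul_pos hLpos hC0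
          have h7 := mul_lt_mul_of_pos_left hexp hpos
          calc 2 * L (n:ℝ) (k:ℝ) p * C0 * Real.exp eu
              = 2 * (L (n:ℝ) (k:ℝ) p * C0 * Real.exp eu) := by ring
            _ < 2 * (L (n:ℝ) (k:ℝ) p * C0 * (89/88 * Real.exp ed)) := by
                have h8 : L (n:ℝ) (k:ℝ) p * C0 * Real.exp eu
                    < L (n:ℝ) (k:ℝ) p * C0 * (89/88 * Real.exp ed) := h7
                linarith
            _ = 89/44 * (L (n:ℝ) (k:ℝ) p * C0 * Real.exp ed) := by ring

end BinTail

theorem binomial_tail_universal_bounds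
    (n k : ℕ) (hn : 0 < n) (hk : 0 < k) (p : ℝ) (hp0 : 0 < p) (hp1 : p < 1)
    (hkp : (k : ℝ) ≤ p * n) :
    Bdown n k p < B n k p ∧ B n k p < Bup n k p ∧
      Bup n k p < (89 / 44) * Bdown n k p :=
  BinTail.main n k hn hk p hp0 hp1 hkp
end

section
/- Let k, m, n be nonnegative integers with 0 ≤ k ≤ n and m ≥ 1, and let 0 < p < 1 with q = 1 - p. Then q^m ≤ B_{n+m,k}(p)/B_{n,k}(p) ≤ b_{n+m,k}(p)/b_{n,k}(p) ≤ q^m · ((n+1)/(n+1-k))^m. -/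
open Real

lemma cross_step (N j k : ℕ) (hj : j ≤ k) (hk : k ≤ N) :
    (N+1).choose j * N.choose k ≤ N.choose j * (N+1).choose k := by
  have hjN : j ≤ N := hj.trans hk
  have h1 : N.choose j * (N + 1) = (N+1).choose j * (N + 1 - j) := Nat.choose_mul_succ_eq N j
  have h2 : N.choose k * (N + 1) = (N+1).choose k * (N + 1 - k) := Nat.choose_mul_succ_eq N k
  have hpos : 0 < (N + 1 - j) * (N + 1 - k) := by
    apply Nat.mul_pos <;> omega
  apply Nat.le_of_mul_le_mul_right _ hpos
  calc (N+1).choose j * N.choose k * ((N+1-j)*(N+1-k))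
      = ((N+1).choose j * (N+1-j)) * (N.choose k * (N+1-k)) := by ring
    _ = (N.choose j * (N+1)) * (N.choose k * (N+1-k)) := by rw [h1]
    _ ≤ (N.choose j * (N+1)) * (N.choose k * (N+1-j)) := by
        gcongr <;> omega
    _ = (N.choose j * (N+1-j)) * (N.choose k * (N+1)) := by ring
    _ = (N.choose j * (N+1-j)) * ((N+1).choose k * (N+1-k)) := by rw [h2]
    _ = N.choose j * (N+1).choose k * ((N+1-j)*(N+1-k)) := by ring

lemma cross (n j k : ℕ) (hj : j ≤ k) (hk : k ≤ n) :
    ∀ m, (n+m).choose j * n.choose k ≤ n.choose j * (n+m).choose k := by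
  intro m
  induction m with
  | zero => simp [Nat.mul_comm]
  | succ m ih =>
      have hkm : k ≤ n + m := by omega
      have hstep := cross_step (n+m) j k hj hkm
      have hP : 0 < (n+m).choose j * (n+m).choose k :=
        Nat.mul_pos (Nat.choose_pos (by omega)) (Nat.choose_pos hkm)
      apply Nat.le_of_mul_le_mul_right _ hP
      calc (n+m+1).choose j * n.choose k * ((n+m).choose j * (n+m).choose k)
          = ((n+m+1).choose j * (n+m).choose k) * ((n+m).choose j * n.choose k) := by ring
        _ ≤ ((n+m).choose j * (n+m+1).choose k) * (n.choose j * (n+m).choose k) :=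
            Nat.mul_le_mul hstep ih
        _ = n.choose j * (n+m+1).choose k * ((n+m).choose j * (n+m).choose k) := by ring

theorem binomial_ratio_in_n_bounds
    (k m n : ℕ) (hkn : k ≤ n) (hm : 1 ≤ m) (p : ℝ) (hp0 : 0 < p) (hp1 : p < 1) :
    (1 - p) ^ m ≤ B (n + m) k p / B n k p ∧
    B (n + m) k p / B n k p ≤ b (n + m) k p / b n k p ∧
    b (n + m) k p / b n k p ≤ (1 - p) ^ m * (((n : ℝ) + 1) / ((n : ℝ) + 1 - k)) ^ m := by
  have hq0 : (0:ℝ) < 1 - p := by linarith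
  have bpos : ∀ N, k ≤ N → 0 < b N k p := by
    intro N hkN
    unfold b
    have hcp : (0:ℝ) < N.choose k := by exact_mod_cast Nat.choose_pos hkN
    exact mul_pos (mul_pos hcp (pow_pos hp0 k)) (pow_pos hq0 _)
  have Bpos : ∀ N, k ≤ N → 0 < B N k p := by
    intro N hkN
    unfold B
    apply Finset.sum_pos
    · intro j hj
      have hjN : j ≤ N := by
        have := Finset.mem_range.mp hj; omega
      have hcp : (0:ℝ) < N.choose j := by exact_mod_cast Nat.choose_pos hjN
      exact mul_pos (mul_pos hcp (pow_pos hp0 j)) (pow_pos hq0 _)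
    · exact ⟨0, Finset.mem_range.mpr (by omega)⟩
  -- step lemma for B
  have Bstep : ∀ N, k ≤ N → (1 - p) * B N k p ≤ B (N+1) k p := by
    intro N hkN
    unfold B
    rw [Finset.mul_sum]
    apply Finset.sum_le_sum
    intro j hj
    have hjk : j ≤ k := by have := Finset.mem_range.mp hj; omega
    have hjN : j ≤ N := hjk.trans hkN
    have he : N + 1 - j = (N - j) + 1 := by omega
    rw [he, pow_succ]
    have hc : (N.choose j : ℝ) ≤ ((N+1).choose j : ℝ) :=
      Nat.cast_le.mpr (Nat.choose_le_choose j (Nat.le_succ N))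
    have h1 : (0:ℝ) ≤ p ^ j * (1-p)^(N-j) := by positivity
    nlinarith [mul_le_mul_of_nonneg_right hc h1]
  have hBlow : ∀ m', (1-p)^m' * B n k p ≤ B (n+m') k p := by
    intro m'
    induction m' with
    | zero => simp
    | succ m ih =>
        calc (1-p)^(m+1) * B n k p = (1-p) * ((1-p)^m * B n k p) := by ring
          _ ≤ (1-p) * B (n+m) k p := by
              apply mul_le_mul_of_nonneg_left ih hq0.le
          _ ≤ B (n+m+1) k p := Bstep (n+m) (by omega)
  refine ⟨?_, ?_, ?_⟩
  · rw [le_div_iff₀ (Bpos n hkn)]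
    exact hBlow m
  · rw [div_le_div_iff₀ (Bpos n hkn) (bpos n hkn)]
    unfold B
    rw [Finset.sum_mul, Finset.mul_sum]
    apply Finset.sum_le_sum
    intro j hj
    have hjk : j ≤ k := by have := Finset.mem_range.mp hj; omega
    unfold b
    have hE : (n+m-j)+(n-k) = (n-j)+(n+m-k) := by omega
    have hL : ((n+m).choose j : ℝ) * p ^ j * (1 - p) ^ (n+m-j) *
        ((n.choose k : ℝ) * p ^ k * (1 - p) ^ (n - k)) =
        (((n+m).choose j * n.choose k : ℕ) : ℝ) * (p ^ (j+k) * (1-p) ^ ((n+m-j)+(n-k))) := by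
      rw [pow_add, pow_add]; push_cast; ring
    have hR : ((n+m).choose k : ℝ) * p ^ k * (1 - p) ^ (n+m-k) *
        ((n.choose j : ℝ) * p ^ j * (1 - p) ^ (n - j)) =
        ((n.choose j * (n+m).choose k : ℕ) : ℝ) * (p ^ (j+k) * (1-p) ^ ((n-j)+(n+m-k))) := by
      rw [pow_add, pow_add]; push_cast; ring
    rw [hL, hR, ← hE]
    have hcc : (((n+m).choose j * n.choose k : ℕ) : ℝ) ≤
        ((n.choose j * (n+m).choose k : ℕ) : ℝ) :=
      Nat.cast_le.mpr (cross n j k hjk hkn m)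
    have hpp : (0:ℝ) ≤ p ^ (j+k) * (1-p) ^ ((n+m-j)+(n-k)) := by positivity
    exact mul_le_mul_of_nonneg_right hcc hpp
  · have hkr : (k:ℝ) ≤ n := Nat.cast_le.mpr hkn
    have hd : (0:ℝ) < (n:ℝ) + 1 - k := by linarith
    -- upper bound on choose ratio
    have ub : ∀ m', ((n+m').choose k : ℝ) * ((n:ℝ)+1-k)^m' ≤ (n.choose k : ℝ) * ((n:ℝ)+1)^m' := by
      intro m'
      induction m' with
      | zero => simp
      | succ m ih =>
          have hkm : k ≤ n + m := by omega
          have hid : ((n+m).choose k : ℝ) * ((n:ℝ)+(m:ℝ)+1) =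
              ((n+m+1).choose k : ℝ) * ((n:ℝ)+(m:ℝ)+1-k) := by
            have := Nat.choose_mul_succ_eq (n+m) k
            have hcast : (((n+m+1) - k : ℕ) : ℝ) = (n:ℝ)+(m:ℝ)+1-k := by
              push_cast [Nat.cast_sub (by omega : k ≤ n+m+1)]; ring
            calc ((n+m).choose k : ℝ) * ((n:ℝ)+(m:ℝ)+1)
                = (((n+m).choose k * (n+m+1) : ℕ) : ℝ) := by push_cast; ring
              _ = (((n+m+1).choose k * ((n+m+1) - k) : ℕ) : ℝ) := by
                  norm_cast
              _ = ((n+m+1).choose k : ℝ) * ((n:ℝ)+(m:ℝ)+1-k) := by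
                  push_cast [Nat.cast_sub (by omega : k ≤ n+m+1)]; ring
          have hdm : (0:ℝ) < (n:ℝ)+(m:ℝ)+1-k := by
            have : (m:ℝ) ≥ 0 := Nat.cast_nonneg m
            linarith
          -- (n+m+1).choose k * (n+1-k) ≤ (n+m).choose k * (n+1)
          have hstep : ((n+m+1).choose k : ℝ) * ((n:ℝ)+1-k) * ((n:ℝ)+(m:ℝ)+1-k) ≤
              ((n+m).choose k : ℝ) * ((n:ℝ)+1) * ((n:ℝ)+(m:ℝ)+1-k) := by
            have hm0 : (0:ℝ) ≤ (m:ℝ) := Nat.cast_nonneg m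
            have hk0 : (0:ℝ) ≤ (k:ℝ) := Nat.cast_nonneg k
            have hc0 : (0:ℝ) ≤ ((n+m+1).choose k : ℝ) := Nat.cast_nonneg _
            nlinarith [hid, mul_nonneg (mul_nonneg (Nat.cast_nonneg ((n+m).choose k) : (0:ℝ) ≤ ((n+m).choose k : ℝ)) hm0) hk0]
          have hstep' : ((n+m+1).choose k : ℝ) * ((n:ℝ)+1-k) ≤
              ((n+m).choose k : ℝ) * ((n:ℝ)+1) :=
            le_of_mul_le_mul_right hstep hdm
          calc ((n+(m+1)).choose k : ℝ) * ((n:ℝ)+1-k)^(m+1)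
              = (((n+m+1).choose k : ℝ) * ((n:ℝ)+1-k)) * ((n:ℝ)+1-k)^m := by
                rw [show n+(m+1) = n+m+1 by ring]; ring
            _ ≤ (((n+m).choose k : ℝ) * ((n:ℝ)+1)) * ((n:ℝ)+1-k)^m := by
                apply mul_le_mul_of_nonneg_right hstep' (by positivity)
            _ = ((n:ℝ)+1) * (((n+m).choose k : ℝ) * ((n:ℝ)+1-k)^m) := by ring
            _ ≤ ((n:ℝ)+1) * ((n.choose k : ℝ) * ((n:ℝ)+1)^m) := by
                apply mul_le_mul_of_nonneg_left ih (by positivity)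
            _ = (n.choose k : ℝ) * ((n:ℝ)+1)^(m+1) := by ring
    rw [div_le_iff₀ (bpos n hkn)]
    unfold b
    have he : n + m - k = (n - k) + m := by omega
    rw [he, pow_add]
    have key : ((n+m).choose k : ℝ) ≤ (n.choose k : ℝ) * (((n:ℝ)+1)/((n:ℝ)+1-k))^m := by
      rw [div_pow, ← mul_div_assoc, le_div_iff₀ (by positivity : (0:ℝ) < ((n:ℝ)+1-k)^m)]
      calc ((n+m).choose k : ℝ) * ((n:ℝ)+1-k)^m ≤ (n.choose k : ℝ) * ((n:ℝ)+1)^m := ub m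
        _ = (n.choose k : ℝ) * ((n:ℝ)+1)^m := rfl
    have hpp : (0:ℝ) ≤ p^k * ((1-p)^(n-k) * (1-p)^m) := by positivity
    calc ((n+m).choose k : ℝ) * p ^ k * ((1-p)^(n-k) * (1-p)^m)
        = ((n+m).choose k : ℝ) * (p^k * ((1-p)^(n-k) * (1-p)^m)) := by ring
      _ ≤ ((n.choose k : ℝ) * (((n:ℝ)+1)/((n:ℝ)+1-k))^m) *
            (p^k * ((1-p)^(n-k) * (1-p)^m)) :=
          mul_le_mul_of_nonneg_right key hpp
      _ = (1-p)^m * (((n:ℝ)+1)/((n:ℝ)+1-k))^m * ((n.choose k : ℝ) * p^k * (1-p)^(n-k)) := by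
          ring
end
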